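/- arXiv:1412.4800 — 7 statements merged into one kernel-verified Lean document; each statement's English description precedes it below -/
import Mathlib

section
/- Let A and C be groups and B a subgroup contained both in the centre Z(A) and in the centre Z(C), and form the free product with amalgamation A *_B C. If h ∈ A with h ∉ B, and g ∈ A *_B C with g ∉ A, then g·h·g⁻¹ ∉ A. -/
universe u

/-- `P` is the free product of its subgroups `A` and `C` with amalgamated central
subgroup `B` (i.e. the cocone of inclusions satisfies the universal property of the
pushout of the two inclusions `B → A` and `B → C`). -/
structure IsCentralAmalgam {P : Type u} [Group P] (A C B : Subgroup P) : Prop where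
  B_le_A : B ≤ A
  B_le_C : B ≤ C
  central_A : ∀ b ∈ B, ∀ a ∈ A, b * a = a * b
  central_C : ∀ b ∈ B, ∀ c ∈ C, b * c = c * b
  isPushout : ∀ (K : Type u) [Group K] (f : ↥A →* K) (g : ↥C →* K),
      (∀ (b : P) (hb : b ∈ B), f ⟨b, B_le_A hb⟩ = g ⟨b, B_le_C hb⟩) →
      ∃! φ : P →* K, φ.comp A.subtype = f ∧ φ.comp C.subtype = g

namespace AmalgamAux

open Monoid Monoid.PushoutI Monoid.CoprodI List

variable {ι : Type*} {G : ι → Type*} [∀ i, Group (G i)] {H : Type*} [Group H]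
  {φ : ∀ i, H →* G i}

/-- product of a list of letters in the pushout -/
def pl (φ : ∀ i, H →* G i) (l : List (Σ i, G i)) : Monoid.PushoutI φ :=
  (l.map fun p => of p.1 p.2).prod

@[simp] theorem pl_nil : pl φ [] = 1 := rfl

@[simp] theorem pl_cons (p : Σ i, G i) (l : List (Σ i, G i)) :
    pl φ (p :: l) = of p.1 p.2 * pl φ l := by
  simp [pl]

@[simp] theorem pl_append (l₁ l₂ : List (Σ i, G i)) :
    pl φ (l₁ ++ l₂) = pl φ l₁ * pl φ l₂ := by
  simp [pl]

theorem base_central [Nonempty ι]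
    (hcen : ∀ (i : ι) (x : G i) (b : H), x * φ i b = φ i b * x)
    (b : H) (x : Monoid.PushoutI φ) : x * base φ b = base φ b * x := by
  induction x using Monoid.PushoutI.induction_on with
  | of i g =>
      rw [← of_apply_eq_base φ i, ← map_mul, ← map_mul, hcen]
  | base h =>
      obtain ⟨i⟩ := ‹Nonempty ι›
      calc base φ h * base φ b = of i (φ i h * φ i b) := by
            rw [map_mul, of_apply_eq_base, of_apply_eq_base]
        _ = of i (φ i b * φ i h) := by rw [hcen i (φ i h) b]
        _ = base φ b * base φ h := by rw [map_mul, of_apply_eq_base, of_apply_eq_base]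
  | mul x y hx hy =>
      rw [mul_assoc, hy, ← mul_assoc, hx, mul_assoc]

/-- a chain'-list of non-range letters gives a reduced word -/
def mkWord (l : List (Σ i, G i)) (hch : l.Chain' fun a b => a.1 ≠ b.1)
    (hr : ∀ p ∈ l, p.2 ∉ (φ p.1).range) : Word G :=
  ⟨l, fun p hp h1 => hr p hp (h1 ▸ one_mem (φ p.1).range), hch⟩

theorem mkWord_reduced (l : List (Σ i, G i)) (hch : l.Chain' fun a b => a.1 ≠ b.1)
    (hr : ∀ p ∈ l, p.2 ∉ (φ p.1).range) : Reduced φ (mkWord l hch hr) := hr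

theorem ofCoprodI_listprod (l : List (Σ i, G i)) :
    ofCoprodI ((l.map fun p => CoprodI.of p.2).prod) = pl φ l := by
  induction l with
  | nil => simp [pl]
  | cons p t ih => simp [pl] at ih ⊢; rw [ih]

theorem ofCoprodI_mkWord_prod (l : List (Σ i, G i)) (hch : l.Chain' fun a b => a.1 ≠ b.1)
    (hr : ∀ p ∈ l, p.2 ∉ (φ p.1).range) :
    ofCoprodI (Word.prod (mkWord l hch hr)) = pl φ l :=
  ofCoprodI_listprod l

/-- Key word lemma: if the product of a reduced list lies in the image of one
factor, the list has length at most one (with matching index). -/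
theorem pl_eq_of (hinj : ∀ i, Function.Injective (φ i))
    (l : List (Σ i, G i)) (hch : l.Chain' fun a b => a.1 ≠ b.1)
    (hr : ∀ p ∈ l, p.2 ∉ (φ p.1).range) {j : ι} {a : G j}
    (heq : pl φ l = of j a) : l = [] ∨ ∃ x : G j, l = [⟨j, x⟩] := by
  by_cases ha : a ∈ (φ j).range
  · obtain ⟨c, rfl⟩ := ha
    left
    have hmem : ofCoprodI (Word.prod (mkWord l hch hr)) ∈ (base φ).range := by
      rw [ofCoprodI_mkWord_prod, heq, of_apply_eq_base]
      exact ⟨c, rfl⟩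
    have := (mkWord_reduced l hch hr).eq_empty_of_mem_range hinj hmem
    simpa [mkWord, Word.empty] using congrArg Word.toList this
  · rcases List.eq_nil_or_concat l with rfl | ⟨l', ⟨k, x⟩, rfl⟩
    · exact Or.inl rfl
    · rw [List.concat_eq_append] at hch hr heq ⊢
      by_cases hkj : k = j
      · subst hkj
        by_cases hx : x * a⁻¹ ∈ (φ k).range
        · -- the prefix l' is in the base range, so it is empty
          obtain ⟨c, hc⟩ := hx
          have hl' : pl φ l' = of k (φ k c⁻¹) := by
            have : pl φ l' * of k x = of k a := by
              simpa [mul_assoc] using heq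
            have hxa : a * x⁻¹ = φ k c⁻¹ := by
              have : x * a⁻¹ = φ k c := hc.symm
              rw [map_inv, ← this]
              group
            calc pl φ l' = of k a * (of k x)⁻¹ := by
                  rw [← this]; group
              _ = of k (a * x⁻¹) := by rw [← map_inv, ← map_mul]
              _ = of k (φ k c⁻¹) := by rw [hxa]
          have hch' : l'.Chain' fun a b => a.1 ≠ b.1 := (List.isChain_append.1 hch).1
          have hr' : ∀ p ∈ l', p.2 ∉ (φ p.1).range := fun p hp =>
            hr p (List.mem_append_left _ hp)
          have hmem : ofCoprodI (Word.prod (mkWord l' hch' hr')) ∈ (base φ).range := by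
            rw [ofCoprodI_mkWord_prod, hl', of_apply_eq_base]
            exact ⟨c⁻¹, rfl⟩
          have := (mkWord_reduced l' hch' hr').eq_empty_of_mem_range hinj hmem
          have : l' = [] := by simpa [mkWord, Word.empty] using congrArg Word.toList this
          subst this
          exact Or.inr ⟨x, rfl⟩
        · -- replace the last letter by x * a⁻¹ : product is 1, contradiction
          exfalso
          have hch0 := List.isChain_append.1 hch
          have hch' : (l' ++ [⟨k, x * a⁻¹⟩] : List (Σ i, G i)).Chain'
              fun a b => a.1 ≠ b.1 := by
            refine List.isChain_append.2 ?_
            exact ⟨hch0.1, List.isChain_singleton _, by simpa using hch0.2.2⟩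
          set L : List (Σ i, G i) := l' ++ [⟨k, x * a⁻¹⟩] with hL
          have hr' : ∀ p ∈ L, p.2 ∉ (φ p.1).range := by
            intro p hp
            rcases List.mem_append.1 hp with hp | hp
            · exact hr p (List.mem_append_left _ hp)
            · simp only [List.mem_singleton] at hp
              subst hp
              exact hx
          have hprod : pl φ L = 1 := by
            have h1 : pl φ l' * of k x = of k a := by
              simpa [mul_assoc] using heq
            simp only [hL, pl_append, pl_cons, pl_nil, mul_one, map_mul]
            calc pl φ l' * (of k x * of k a⁻¹) = pl φ l' * of k x * of k a⁻¹ := by group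
              _ = of k a * of k a⁻¹ := by rw [h1]
              _ = 1 := by rw [← map_mul]; simp
          have hmem : ofCoprodI (Word.prod (mkWord L hch' hr')) ∈ (base φ).range := by
            rw [ofCoprodI_mkWord_prod, hprod]
            exact ⟨1, by simp⟩
          have := (mkWord_reduced L hch' hr').eq_empty_of_mem_range hinj hmem
          have : L = [] := by simpa [mkWord, Word.empty] using congrArg Word.toList this
          simp [hL] at this
      · -- last index differs from j : append ⟨j, a⁻¹⟩, product 1, contradiction
        exfalso
        have hch' : ((l' ++ [⟨k, x⟩]) ++ [⟨j, a⁻¹⟩] : List (Σ i, G i)).Chain'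
            fun a b => a.1 ≠ b.1 := by
          refine List.isChain_append.2 ?_
          exact ⟨hch, List.isChain_singleton _, by simpa using hkj⟩
        set L : List (Σ i, G i) := (l' ++ [⟨k, x⟩]) ++ [⟨j, a⁻¹⟩] with hL
        have hr' : ∀ p ∈ L, p.2 ∉ (φ p.1).range := by
          intro p hp
          rcases List.mem_append.1 hp with hp | hp
          · exact hr p hp
          · simp only [List.mem_singleton] at hp
            subst hp
            simpa using ha
        have hprod : pl φ L = 1 := by
          rw [hL, pl_append, heq]
          simp only [pl_cons, pl_nil, mul_one]
          rw [← map_mul]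
          simp
        have hmem : ofCoprodI (Word.prod (mkWord L hch' hr')) ∈ (base φ).range := by
          rw [ofCoprodI_mkWord_prod, hprod]
          exact ⟨1, by simp⟩
        have := (mkWord_reduced L hch' hr').eq_empty_of_mem_range hinj hmem
        have : L = [] := by simpa [mkWord, Word.empty] using congrArg Word.toList this
        simp [hL] at this


/-- reversed list of inverses -/
def rinv (l : List (Σ i, G i)) : List (Σ i, G i) :=
  (l.map fun p => (⟨p.1, p.2⁻¹⟩ : Σ i, G i)).reverse

@[simp] theorem rinv_nil : rinv ([] : List (Σ i, G i)) = [] := rfl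

theorem rinv_append_singleton (l : List (Σ i, G i)) (p : Σ i, G i) :
    rinv (l ++ [p]) = ⟨p.1, p.2⁻¹⟩ :: rinv l := by
  simp [rinv]

theorem rinv_cons (p : Σ i, G i) (l : List (Σ i, G i)) :
    rinv (p :: l) = rinv l ++ [⟨p.1, p.2⁻¹⟩] := by
  simp [rinv]

theorem pl_rinv (l : List (Σ i, G i)) : pl φ (rinv l) = (pl φ l)⁻¹ := by
  induction l with
  | nil => simp
  | cons p t ih =>
      rw [rinv_cons, pl_append, pl_cons, pl_cons, ih]
      simp [mul_assoc]

theorem chain'_rinv {l : List (Σ i, G i)} (hch : l.Chain' fun a b => a.1 ≠ b.1) :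
    (rinv l).Chain' fun a b => a.1 ≠ b.1 := by
  rw [rinv]; refine List.isChain_reverse.2 ((List.isChain_map _).2 ?_)
  exact hch.imp fun a b h => by exact fun hc => h hc.symm

theorem rinv_not_range {l : List (Σ i, G i)}
    (hr : ∀ p ∈ l, p.2 ∉ (φ p.1).range) :
    ∀ p ∈ rinv l, p.2 ∉ (φ p.1).range := by
  intro p hp
  rw [rinv, List.mem_reverse, List.mem_map] at hp
  obtain ⟨q, hq, rfl⟩ := hp
  simpa using hr q hq

/-- One step of the reduction algorithm : multiply a decomposed element on the left
by a generator. -/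
theorem decomp_cons [Nonempty ι]
    (hcen : ∀ (i : ι) (x : G i) (b : H), x * φ i b = φ i b * x)
    (i : ι) (x : G i) (l : List (Σ i, G i)) (hch : l.Chain' fun a b => a.1 ≠ b.1)
    (hr : ∀ p ∈ l, p.2 ∉ (φ p.1).range) (b : H) :
    ∃ (l' : List (Σ i, G i)) (b' : H), (l'.Chain' fun a b => a.1 ≠ b.1) ∧
      (∀ p ∈ l', p.2 ∉ (φ p.1).range) ∧
      of i x * (pl φ l * base φ b) = pl φ l' * base φ b' := by
  match l, hch, hr with
  | [], _, _ =>
    by_cases hx : x ∈ (φ i).range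
    · obtain ⟨c, rfl⟩ := hx
      exact ⟨[], c * b, List.isChain_nil, by simp, by
        simp [of_apply_eq_base, map_mul, mul_assoc]⟩
    · exact ⟨[⟨i, x⟩], b, List.isChain_singleton _, by simpa using hx, by simp [mul_assoc]⟩
  | ⟨i₁, g₁⟩ :: t, hch, hr =>
    by_cases hii : i = i₁
    · subst hii
      by_cases hy : x * g₁ ∈ (φ i).range
      · obtain ⟨c, hc⟩ := hy
        refine ⟨t, c * b, hch.tail, fun p hp => hr p (List.mem_cons_of_mem _ hp), ?_⟩
        have e1 : of i x * (pl φ (⟨i, g₁⟩ :: t) * base φ b)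
            = base φ c * (pl φ t * base φ b) := by
          rw [pl_cons, ← of_apply_eq_base φ i c, hc, map_mul]
          group
        rw [e1, ← mul_assoc, ← base_central hcen c (pl φ t), map_mul]
        group
      · refine ⟨⟨i, x * g₁⟩ :: t, b, ?_, ?_, ?_⟩
        · obtain ⟨h1, h2⟩ := List.isChain_cons.1 hch
          exact List.isChain_cons.2 ⟨h1, h2⟩
        · intro p hp
          rcases List.mem_cons.1 hp with rfl | hp
          · exact hy
          · exact hr p (List.mem_cons_of_mem _ hp)
        · simp [pl_cons, mul_assoc]
    · by_cases hx : x ∈ (φ i).range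
      · obtain ⟨c, rfl⟩ := hx
        refine ⟨⟨i₁, g₁⟩ :: t, c * b, hch, hr, ?_⟩
        rw [of_apply_eq_base, ← mul_assoc,
          ← base_central hcen c (pl φ (⟨i₁, g₁⟩ :: t)), map_mul]
        group
      · refine ⟨⟨i, x⟩ :: ⟨i₁, g₁⟩ :: t, b, List.isChain_cons_cons.2 ⟨by simpa using hii, hch⟩, ?_, ?_⟩
        · intro p hp
          rcases List.mem_cons.1 hp with rfl | hp
          · exact hx
          · exact hr p hp
        · simp only [pl_cons]; group

/-- Every element of the pushout decomposes as a reduced list times a base element. -/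
theorem exists_decomp [Nonempty ι]
    (hcen : ∀ (i : ι) (x : G i) (b : H), x * φ i b = φ i b * x)
    (g : Monoid.PushoutI φ) :
    ∃ (l : List (Σ i, G i)) (b : H), (l.Chain' fun a b => a.1 ≠ b.1) ∧
      (∀ p ∈ l, p.2 ∉ (φ p.1).range) ∧ g = pl φ l * base φ b := by
  have key : ∀ (l : List (Σ i, G i)), (l.Chain' fun a b => a.1 ≠ b.1) →
      (∀ p ∈ l, p.2 ∉ (φ p.1).range) → ∀ b : H,
      ∃ (l' : List (Σ i, G i)) (b' : H), (l'.Chain' fun a b => a.1 ≠ b.1) ∧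
        (∀ p ∈ l', p.2 ∉ (φ p.1).range) ∧
        g * (pl φ l * base φ b) = pl φ l' * base φ b' := by
    induction g using Monoid.PushoutI.induction_on with
    | of i x => intro l hch hr b; exact decomp_cons hcen i x l hch hr b
    | base h =>
        intro l hch hr b
        refine ⟨l, h * b, hch, hr, ?_⟩
        rw [← mul_assoc, ← base_central hcen h (pl φ l), map_mul]
        group
    | mul x y hx hy =>
        intro l hch hr b
        obtain ⟨l₁, b₁, hch₁, hr₁, h₁⟩ := hy l hch hr b
        obtain ⟨l₂, b₂, hch₂, hr₂, h₂⟩ := hx l₁ hch₁ hr₁ b₁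
        exact ⟨l₂, b₂, hch₂, hr₂, by rw [mul_assoc, h₁, h₂]⟩
  obtain ⟨l, b, hch, hr, h⟩ := key [] List.isChain_nil (by simp) 1
  exact ⟨l, b, hch, hr, by simpa using h⟩

/-- The key conjugation lemma, proved by induction on the reduced list. -/
theorem conj_key [Nonempty ι] (hinj : ∀ i, Function.Injective (φ i))
    (hcen : ∀ (i : ι) (x : G i) (b : H), x * φ i b = φ i b * x)
    (l : List (Σ i, G i)) :
    ∀ (_ : l.Chain' fun a b => a.1 ≠ b.1) (_ : ∀ p ∈ l, p.2 ∉ (φ p.1).range)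
      {j : ι} (h₀ a : G j) (_ : h₀ ∉ (φ j).range)
      (_ : pl φ l * of j h₀ * (pl φ l)⁻¹ = of j a),
      l = [] ∨ ∃ x : G j, l = [⟨j, x⟩] := by
  induction l using List.reverseRecOn with
  | nil => intro _ _ j h₀ a _ _; exact Or.inl rfl
  | append_singleton l' p ih =>
      rcases p with ⟨k, x⟩
      intro hch hr j h₀ a hh heq
      by_cases hkj : k = j
      · subst hkj
        have hch' : l'.Chain' fun a b => a.1 ≠ b.1 := (List.isChain_append.1 hch).1
        have hr' : ∀ p ∈ l', p.2 ∉ (φ p.1).range := fun p hp =>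
          hr p (List.mem_append_left _ hp)
        have hh' : x * h₀ * x⁻¹ ∉ (φ k).range := by
          rintro ⟨c, hc⟩
          apply hh
          refine ⟨c, ?_⟩
          have h1 : x * h₀ = φ k c * x := by rw [hc]; group
          rw [← hcen k x c] at h1
          exact mul_left_cancel h1 |>.symm
        have heq' : pl φ l' * of k (x * h₀ * x⁻¹) * (pl φ l')⁻¹ = of k a := by
          have e : pl φ (l' ++ [⟨k, x⟩]) = pl φ l' * of k x := by
            rw [pl_append, pl_cons, pl_nil, mul_one]
          rw [e] at heq
          rw [map_mul, map_mul, map_inv, ← heq]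
          group
        rcases ih hch' hr' (x * h₀ * x⁻¹) a hh' heq' with rfl | ⟨y, hy⟩
        · exact Or.inr ⟨x, rfl⟩
        · exfalso
          subst hy
          simp only [List.cons_append, List.nil_append] at hch
          exact (List.isChain_cons_cons.1 hch).1 rfl
      · exfalso
        have hxlast : x ∉ (φ k).range := hr ⟨k, x⟩ (by simp)
        -- the big reduced word
        set m : List (Σ i, G i) := l' ++ [⟨k, x⟩] with hm
        have hRhead : rinv m = ⟨k, x⁻¹⟩ :: rinv l' := rinv_append_singleton l' ⟨k, x⟩
        have hchR : (rinv m).Chain' fun a b => a.1 ≠ b.1 := chain'_rinv hch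
        have hchmid : ((⟨j, h₀⟩ : Σ i, G i) :: rinv m).Chain' fun a b => a.1 ≠ b.1 := by
          rw [hRhead] at hchR ⊢
          exact List.isChain_cons_cons.2 ⟨fun hjk => hkj hjk.symm, hchR⟩
        have hchL : (m ++ (⟨j, h₀⟩ : Σ i, G i) :: rinv m).Chain'
            fun a b => a.1 ≠ b.1 := by
          refine List.isChain_append.2 ?_
          refine ⟨hch, hchmid, ?_⟩
          intro p hp q hq
          rw [hm, List.getLast?_concat] at hp
          rw [List.head?_cons] at hq
          simp only [Option.mem_def, Option.some.injEq] at hp hq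
          subst hp
          subst hq
          exact hkj
        have hrL : ∀ p ∈ m ++ (⟨j, h₀⟩ : Σ i, G i) :: rinv m, p.2 ∉ (φ p.1).range := by
          intro p hp
          rcases List.mem_append.1 hp with hp | hp
          · exact hr p hp
          · rcases List.mem_cons.1 hp with rfl | hp
            · exact hh
            · exact rinv_not_range hr p hp
        have hplL : pl φ (m ++ (⟨j, h₀⟩ : Σ i, G i) :: rinv m) = of j a := by
          rw [pl_append, pl_cons, pl_rinv, ← heq]
          group
        rcases pl_eq_of hinj _ hchL hrL hplL with hnil | ⟨y, hy⟩
        · simp [hm] at hnil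
        · rw [hm] at hy
          have := congrArg List.length hy
          simp [rinv] at this
          omega

section Transfer

variable {P : Type u} [Group P]

/-- the two-element family of groups -/
def Fam (A C : Subgroup P) : Bool → Type u
  | true => ↥A
  | false => ↥C

instance famGroup (A C : Subgroup P) : ∀ i, Group (Fam A C i)
  | true => by dsimp only [Fam]; infer_instance
  | false => by dsimp only [Fam]; infer_instance

/-- the two inclusions of the base -/
def famMap {A C B : Subgroup P} (hBA : B ≤ A) (hBC : B ≤ C) : ∀ i, ↥B →* Fam A C i
  | true => Subgroup.inclusion hBA
  | false => Subgroup.inclusion hBC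

/-- the two projections back to `P` -/
def famProj (A C : Subgroup P) : ∀ i, Fam A C i →* P
  | true => A.subtype
  | false => C.subtype

end Transfer

end AmalgamAux

/-- If `h ∈ A`, `h ∉ B` and `g ∉ A`, then `g * h * g⁻¹ ∉ A`. -/
theorem conj_not_mem_of_isCentralAmalgam {P : Type u} [Group P]
    {A C B : Subgroup P} (hAm : IsCentralAmalgam A C B)
    {h : P} (hhA : h ∈ A) (hhB : h ∉ B) {g : P} (hgA : g ∉ A) :
    g * h * g⁻¹ ∉ A := by

  intro hconj
  set φ' : ∀ i, ↥B →* AmalgamAux.Fam A C i := AmalgamAux.famMap hAm.B_le_A hAm.B_le_C with hφ'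
  have hinj : ∀ i, Function.Injective (φ' i) := by
    intro i
    cases i
    · exact Subgroup.inclusion_injective hAm.B_le_C
    · exact Subgroup.inclusion_injective hAm.B_le_A
  have hcen : ∀ (i : Bool) (x : AmalgamAux.Fam A C i) (b : ↥B), x * φ' i b = φ' i b * x := by
    intro i
    cases i <;> intro x b <;> apply Subtype.ext
    · exact (hAm.central_C b.1 b.2 x.1 x.2).symm
    · exact (hAm.central_A b.1 b.2 x.1 x.2).symm
  -- the comparison map σ : P →* PushoutI φ'
  obtain ⟨σ, ⟨hσA, hσC⟩, -⟩ := hAm.isPushout (Monoid.PushoutI φ')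
      (Monoid.PushoutI.of (φ := φ') true) (Monoid.PushoutI.of (φ := φ') false)
      (fun b hb => by
        have h1 : (⟨b, hAm.B_le_A hb⟩ : ↥A) = φ' true ⟨b, hb⟩ := rfl
        have h2 : (⟨b, hAm.B_le_C hb⟩ : ↥C) = φ' false ⟨b, hb⟩ := rfl
        rw [h1, h2]
        exact (Monoid.PushoutI.of_apply_eq_base φ' true ⟨b, hb⟩).trans
          (Monoid.PushoutI.of_apply_eq_base φ' false ⟨b, hb⟩).symm)
  -- the retraction π : PushoutI φ' →* P
  have hfs : ∀ i, (AmalgamAux.famProj A C i).comp (φ' i) = B.subtype := by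
    intro i
    cases i <;> rfl
  set π : Monoid.PushoutI φ' →* P := Monoid.PushoutI.lift (AmalgamAux.famProj A C) B.subtype hfs with hπ
  have hπA : ∀ a : ↥A, π (Monoid.PushoutI.of (φ := φ') true a) = a := fun a =>
    Monoid.PushoutI.lift_of _ _ _ _
  have hπC : ∀ c : ↥C, π (Monoid.PushoutI.of (φ := φ') false c) = c := fun c =>
    Monoid.PushoutI.lift_of _ _ _ _
  -- π ∘ σ = id
  obtain ⟨ψ, -, huniq⟩ := hAm.isPushout P A.subtype C.subtype (fun b hb => rfl)
  have hc1 : (π.comp σ).comp A.subtype = A.subtype := by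
    rw [MonoidHom.comp_assoc, hσA]
    ext a
    exact hπA a
  have hc2 : (π.comp σ).comp C.subtype = C.subtype := by
    rw [MonoidHom.comp_assoc, hσC]
    ext c
    exact hπC c
  have hretr : ∀ x : P, π (σ x) = x := by
    have e1 := huniq (π.comp σ) ⟨hc1, hc2⟩
    have e2 := huniq (MonoidHom.id P) ⟨MonoidHom.id_comp _, MonoidHom.id_comp _⟩
    intro x
    have := congrArg (fun f : P →* P => f x) (e1.trans e2.symm)
    simpa using this
  -- σ of an element not in A is not in the image of `of true`
  have hσnotA : ∀ a : ↥A, σ g ≠ Monoid.PushoutI.of (φ := φ') true a := by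
    intro a hx
    apply hgA
    have : π (σ g) = π (Monoid.PushoutI.of (φ := φ') true a) := by rw [hx]
    rw [hretr, hπA] at this
    rw [this]
    exact a.2
  -- images of h and of the conjugate
  have hσh : σ h = Monoid.PushoutI.of (φ := φ') true ⟨h, hhA⟩ := by
    have := congrArg (fun f : ↥A →* Monoid.PushoutI φ' => f ⟨h, hhA⟩) hσA
    exact this
  have hσconj : σ (g * h * g⁻¹)
      = Monoid.PushoutI.of (φ := φ') true ⟨g * h * g⁻¹, hconj⟩ := by
    have := congrArg (fun f : ↥A →* Monoid.PushoutI φ' => f ⟨g * h * g⁻¹, hconj⟩) hσA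
    exact this
  have hh₀ : (⟨h, hhA⟩ : ↥A) ∉ (φ' true).range := by
    rintro ⟨b, hb⟩
    apply hhB
    have : h = b.1 := congrArg Subtype.val hb.symm
    rw [this]
    exact b.2
  -- decompose σ g
  obtain ⟨l, b, hch, hr, hdec⟩ := AmalgamAux.exists_decomp (φ := φ') hcen (σ g)
  have hkey : AmalgamAux.pl φ' l * Monoid.PushoutI.of (φ := φ') true ⟨h, hhA⟩ * (AmalgamAux.pl φ' l)⁻¹
      = Monoid.PushoutI.of (φ := φ') true ⟨g * h * g⁻¹, hconj⟩ := by
    have h1 : σ g * σ h * (σ g)⁻¹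
        = Monoid.PushoutI.of (φ := φ') true ⟨g * h * g⁻¹, hconj⟩ := by
      rw [← map_inv, ← map_mul, ← map_mul, hσconj]
    rw [hdec, hσh] at h1
    rw [← h1, mul_inv_rev]
    have h2 := AmalgamAux.base_central (φ := φ') hcen b
        (Monoid.PushoutI.of (φ := φ') true ⟨h, hhA⟩)
    calc AmalgamAux.pl φ' l * Monoid.PushoutI.of (φ := φ') true ⟨h, hhA⟩ * (AmalgamAux.pl φ' l)⁻¹
        = AmalgamAux.pl φ' l * (Monoid.PushoutI.of (φ := φ') true ⟨h, hhA⟩ * Monoid.PushoutI.base φ' b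
            * (Monoid.PushoutI.base φ' b)⁻¹) * (AmalgamAux.pl φ' l)⁻¹ := by group
      _ = AmalgamAux.pl φ' l * (Monoid.PushoutI.base φ' b * Monoid.PushoutI.of (φ := φ') true ⟨h, hhA⟩
            * (Monoid.PushoutI.base φ' b)⁻¹) * (AmalgamAux.pl φ' l)⁻¹ := by rw [h2]
      _ = AmalgamAux.pl φ' l * Monoid.PushoutI.base φ' b * Monoid.PushoutI.of (φ := φ') true ⟨h, hhA⟩
            * ((Monoid.PushoutI.base φ' b)⁻¹ * (AmalgamAux.pl φ' l)⁻¹) := by group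
  rcases AmalgamAux.conj_key hinj hcen l hch hr _ _ hh₀ hkey with rfl | ⟨x, rfl⟩
  · refine hσnotA (φ' true b) ?_
    rw [hdec, Monoid.PushoutI.of_apply_eq_base φ' true b]
    simp
  · refine hσnotA (x * φ' true b) ?_
    rw [hdec, map_mul, Monoid.PushoutI.of_apply_eq_base φ' true b]
    simp [mul_assoc]
end

section
/- Let A and C be groups and B a subgroup contained both in the centre Z(A) and in the centre Z(C), and form the free product with amalgamation A *_B C. If h ∈ A with h ∉ B, and g ∈ A *_B C with g ∉ A, then the commutator g·h·g⁻¹·h⁻¹ ∉ A. -/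
universe u

namespace AmalgamHelper
open Monoid Function List

variable {ι : Type*} {G : ι → Type*} [∀ i, Group (G i)] {H : Type*} [Group H]
  {φ : ∀ i, H →* G i}

def lprod (φ : ∀ i, H →* G i) (L : List (Σ i, G i)) : PushoutI φ :=
  (L.map fun l => PushoutI.of (φ := φ) l.1 l.2).prod

@[simp] theorem lprod_nil : lprod φ [] = 1 := rfl

@[simp] theorem lprod_cons (a : Σ i, G i) (L : List (Σ i, G i)) :
    lprod φ (a :: L) = PushoutI.of (φ := φ) a.1 a.2 * lprod φ L := by
  simp [lprod]

@[simp] theorem lprod_append (L₁ L₂ : List (Σ i, G i)) :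
    lprod φ (L₁ ++ L₂) = lprod φ L₁ * lprod φ L₂ := by
  simp [lprod]

def linv (L : List (Σ i, G i)) : List (Σ i, G i) :=
  (L.map fun l => (⟨l.1, l.2⁻¹⟩ : Σ i, G i)).reverse

@[simp] theorem lprod_linv (L : List (Σ i, G i)) :
    lprod φ (linv L) = (lprod φ L)⁻¹ := by
  induction L with
  | nil => simp [linv]
  | cons a L ih =>
    simp only [linv, map_cons, reverse_cons] at *
    simp [lprod_append, ih, lprod_cons, mul_inv_rev, ← PushoutI.of_apply_eq_base]

theorem chain'_linv {L : List (Σ i, G i)}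
    (h : L.Chain' fun l l' => l.1 ≠ l'.1) :
    (linv L).Chain' fun l l' => l.1 ≠ l'.1 := by
  rw [linv, List.Chain', isChain_reverse]
  refine isChain_map_of_isChain _ ?_ h
  intro a b hab
  exact fun e => hab e.symm

theorem mem_linv {L : List (Σ i, G i)} {l : Σ i, G i} (h : l ∈ linv L) :
    ∃ l' ∈ L, l = ⟨l'.1, l'.2⁻¹⟩ := by
  rw [linv, mem_reverse, mem_map] at h
  rcases h with ⟨l', h1, h2⟩
  exact ⟨l', h1, h2.symm⟩

theorem eq_nil_of_lprod_mem_base (hφ : ∀ i, Injective (φ i))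
    {L : List (Σ i, G i)}
    (hch : L.Chain' fun l l' => l.1 ≠ l'.1)
    (hr : ∀ l ∈ L, l.2 ∉ (φ l.1).range)
    (h : lprod φ L ∈ (PushoutI.base φ).range) : L = [] := by
  classical
  have hne : ∀ l ∈ L, l.2 ≠ 1 := fun l hl h1 => hr l hl (h1 ▸ one_mem _)
  let w : CoprodI.Word G := ⟨L, hne, hch⟩
  have hred : PushoutI.Reduced φ w := fun l hl => hr l hl
  have hprod : PushoutI.ofCoprodI (φ := φ) w.prod = lprod φ L := by
    simp only [CoprodI.Word.prod, lprod, map_list_prod, List.map_map]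
    simp [Function.comp_def]
    rfl
  have := hred.eq_empty_of_mem_range hφ (by rwa [hprod])
  simpa [w, CoprodI.Word.empty] using congrArg CoprodI.Word.toList this

theorem core (hφ : ∀ i, Injective (φ i)) (i₀ : ι)
    (hc : ∀ (k : H) (a : G i₀), φ i₀ k * a = a * φ i₀ k) :
    ∀ (n : ℕ) (L : List (Σ i, G i)), L.length ≤ n →
      L.Chain' (fun l l' => l.1 ≠ l'.1) →
      (∀ l ∈ L, l.2 ∉ (φ l.1).range) →
      ∀ h'' : G i₀, h'' ∉ (φ i₀).range →
      (lprod φ L * PushoutI.of (φ := φ) i₀ h'' * (lprod φ L)⁻¹ ∈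
        (PushoutI.of (φ := φ) i₀).range) →
      ∀ l ∈ L, l.1 = i₀ := by
  intro n
  induction n with
  | zero =>
    intro L hlen _ _ h'' _ _ l hl
    rw [Nat.le_zero, List.length_eq_zero_iff] at hlen
    subst hlen; simp at hl
  | succ n ih =>
    intro L hlen hch hr h'' hh'' hmem l hl
    cases L with
    | nil => simp at hl
    | cons a L' =>
    simp only [List.length_cons, Nat.add_le_add_iff_right] at hlen
    by_cases ha : a.1 = i₀
    · -- peel left
      have hx : PushoutI.of (φ := φ) a.1 a.2 ∈ (PushoutI.of (φ := φ) i₀).range := by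
        obtain ⟨i, x⟩ := a
        cases ha
        exact ⟨x, rfl⟩
      have hmem' : lprod φ L' * PushoutI.of (φ := φ) i₀ h'' * (lprod φ L')⁻¹ ∈
          (PushoutI.of (φ := φ) i₀).range := by
        have h2 := mul_mem (mul_mem (inv_mem hx) hmem) hx
        simpa [lprod_cons, mul_assoc, mul_inv_rev] using h2
      have hall := ih L' hlen hch.tail (fun l hl => hr l (mem_cons_of_mem _ hl)) h'' hh'' hmem'
      rcases mem_cons.1 hl with hl | hl
      · subst hl; exact ha
      · exact hall l hl
    · -- first letter has index ≠ i₀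
      rcases (a :: L').eq_nil_or_concat' with hnil | ⟨L₀, c, hLc⟩
      · simp at hnil
      by_cases hc1 : c.1 = i₀
      · -- peel right
        obtain ⟨t, rfl⟩ : ∃ t : G i₀, c = ⟨i₀, t⟩ := by
          obtain ⟨j, t⟩ := c
          cases hc1
          exact ⟨t, rfl⟩
        have hlen₀ : L₀.length ≤ n := by
          have h3 := congrArg List.length hLc
          simp only [List.length_cons, List.length_append, List.length_singleton] at h3
          omega
        have hch' := hch
        rw [hLc, List.Chain', isChain_append] at hch'
        have hr₀ : ∀ l ∈ L₀, l.2 ∉ (φ l.1).range := fun l hl =>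
          hr l (hLc ▸ mem_append_left _ hl)
        have ht : t ∉ (φ i₀).range :=
          hr ⟨i₀, t⟩ (hLc ▸ mem_append_right _ (mem_singleton_self _))
        have hh3 : t * h'' * t⁻¹ ∉ (φ i₀).range := by
          rintro ⟨k, hk⟩
          apply hh''
          refine ⟨k, ?_⟩
          have h4 : h'' = t⁻¹ * (φ i₀ k) * t := by
            rw [hk]; group
          rw [h4, ← hc k t⁻¹, mul_assoc, inv_mul_cancel, mul_one]
        have hmem₀ : lprod φ L₀ * PushoutI.of (φ := φ) i₀ (t * h'' * t⁻¹) *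
            (lprod φ L₀)⁻¹ ∈ (PushoutI.of (φ := φ) i₀).range := by
          have h5 : lprod φ (a :: L') * PushoutI.of (φ := φ) i₀ h'' * (lprod φ (a :: L'))⁻¹
              = lprod φ L₀ * PushoutI.of (φ := φ) i₀ (t * h'' * t⁻¹) * (lprod φ L₀)⁻¹ := by
            rw [hLc]
            simp only [lprod_append, lprod_cons, lprod_nil, mul_one, map_mul, map_inv, mul_inv_rev]
            group
          rwa [h5] at hmem
        have hall := ih L₀ hlen₀ hch'.1 hr₀ _ hh3 hmem₀
        have hl' : l ∈ L₀ ++ [(⟨i₀, t⟩ : Σ i, G i)] := hLc ▸ hl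
        rcases mem_append.1 hl' with h1 | h1
        · exact hall l h1
        · rw [mem_singleton.1 h1]
      · -- contradiction case
        exfalso
        rcases hmem with ⟨b, hb⟩
        set L : List (Σ i, G i) := a :: L' with hL
        set u : List (Σ i, G i) := L ++ ⟨i₀, h''⟩ :: linv L with hu
        have hlastL : L.getLast? = some c := by
          rw [hLc]; exact getLast?_concat
        have hheadL : L.head? = some a := rfl
        have hlinv_ne : linv L ≠ [] := by
          simp [linv, hL]
        have hheadlinv : (linv L).head? = some ⟨c.1, c.2⁻¹⟩ := by
          rw [linv, head?_reverse, getLast?_map, hlastL, Option.map_some]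
        have hlastlinv : (linv L).getLast? = some ⟨a.1, a.2⁻¹⟩ := by
          rw [linv, getLast?_reverse, head?_map, hheadL, Option.map_some]
        have hchu : u.Chain' (fun l l' => l.1 ≠ l'.1) := by
          rw [hu, List.Chain', isChain_append]
          refine ⟨hch, ?_, ?_⟩
          · rw [isChain_cons]
            refine ⟨?_, chain'_linv hch⟩
            intro y hy
            rw [hheadlinv, Option.mem_some_iff] at hy
            subst hy
            exact fun e => hc1 e.symm
          · intro x hx y hy
            rw [hlastL, Option.mem_some_iff] at hx
            simp only [head?_cons, Option.mem_some_iff] at hy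
            subst hx; subst hy
            exact hc1
        have hru : ∀ l ∈ u, l.2 ∉ (φ l.1).range := by
          intro l hlu
          rcases mem_append.1 hlu with h1 | h1
          · exact hr l h1
          · rcases mem_cons.1 h1 with h1 | h1
            · subst h1; exact hh''
            · rcases mem_linv h1 with ⟨l', hl', rfl⟩
              intro hmem'
              exact hr l' hl' (by simpa using inv_mem hmem')
        have hprodu : lprod φ u = PushoutI.of (φ := φ) i₀ b := by
          rw [hu]
          simp only [lprod_append, lprod_cons, lprod_linv, ← mul_assoc]
          exact hb.symm
        by_cases hbr : b ∈ (φ i₀).range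
        · rcases hbr with ⟨k, hk⟩
          have h6 : lprod φ u ∈ (PushoutI.base φ).range := by
            rw [hprodu, ← hk, PushoutI.of_apply_eq_base]
            exact ⟨k, rfl⟩
          have h7 := eq_nil_of_lprod_mem_base hφ hchu hru h6
          simp [hu, hL] at h7
        · -- b not in range: append b⁻¹
          set v : List (Σ i, G i) := u ++ [⟨i₀, b⁻¹⟩] with hv
          have hlastu : u.getLast? = some ⟨a.1, a.2⁻¹⟩ := by
            rw [hu, getLast?_append_of_ne_nil _ (by simp)]
            show ([(⟨i₀, h''⟩ : Σ i, G i)] ++ linv L).getLast? = _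
            rw [getLast?_append_of_ne_nil _ hlinv_ne, hlastlinv]
          have hchv : v.Chain' (fun l l' => l.1 ≠ l'.1) := by
            rw [hv, List.Chain', isChain_append]
            refine ⟨hchu, isChain_singleton _, ?_⟩
            intro x hx y hy
            rw [hlastu, Option.mem_some_iff] at hx
            simp only [head?_cons, Option.mem_some_iff] at hy
            subst hx; subst hy
            exact ha
          have hrv : ∀ l ∈ v, l.2 ∉ (φ l.1).range := by
            intro l hlv
            rcases mem_append.1 hlv with h1 | h1
            · exact hru l h1
            · rw [mem_singleton.1 h1]
              intro hmem'
              exact hbr (by simpa using inv_mem hmem')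
          have hprodv : lprod φ v = 1 := by
            rw [hv, lprod_append, hprodu]
            simp [lprod]
          have h8 : lprod φ v ∈ (PushoutI.base φ).range := by
            rw [hprodv]; exact one_mem _
          have h9 := eq_nil_of_lprod_mem_base hφ hchv hrv h8
          simp [hv] at h9


theorem ofCoprodI_word_prod (w : CoprodI.Word G) :
    PushoutI.ofCoprodI (φ := φ) w.prod = lprod φ w.toList := by
  simp only [CoprodI.Word.prod, lprod, map_list_prod, List.map_map]
  simp [Function.comp_def]

theorem base_mul_comm (i₀ : ι) (central : ∀ i (k : H) (a : G i), φ i k * a = a * φ i k)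
    (k : H) (x : PushoutI φ) :
    PushoutI.base φ k * x = x * PushoutI.base φ k := by
  induction x using PushoutI.induction_on with
  | of i g => rw [← PushoutI.of_apply_eq_base φ i k, ← map_mul, ← map_mul, central]
  | base h =>
    rw [← PushoutI.of_apply_eq_base φ i₀ h, ← PushoutI.of_apply_eq_base φ i₀ k,
      ← map_mul (PushoutI.of (φ := φ) i₀), ← map_mul (PushoutI.of (φ := φ) i₀),
      central i₀ k]
  | mul x y ihx ihy => rw [← mul_assoc, ihx, mul_assoc, ihy, mul_assoc]

theorem mem_range_of_conj_mem (hφ : ∀ i, Injective (φ i))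
    (central : ∀ i (k : H) (a : G i), φ i k * a = a * φ i k) (i₀ : ι)
    {h' : G i₀} (hh' : h' ∉ (φ i₀).range) {g : PushoutI φ}
    (hg : g * PushoutI.of (φ := φ) i₀ h' * g⁻¹ ∈ (PushoutI.of (φ := φ) i₀).range) :
    g ∈ (PushoutI.of (φ := φ) i₀).range := by
  classical
  rcases PushoutI.NormalWord.transversal_nonempty φ hφ with ⟨d⟩
  set w : PushoutI.NormalWord d := PushoutI.NormalWord.equiv g with hw
  have hgw : w.prod = g := PushoutI.NormalWord.equiv.symm_apply_apply g
  have hL : g = PushoutI.base φ w.head * lprod φ w.toList := by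
    rw [← hgw]
    rw [PushoutI.NormalWord.prod, ofCoprodI_word_prod]
  have hr : ∀ l ∈ w.toList, l.2 ∉ (φ l.1).range := by
    rintro l hl ⟨k, hk⟩
    have hset : l.2 ∈ d.set l.1 := w.normalized l.1 l.2 (by rwa [Sigma.eta])
    have hone : l.2 = 1 := by
      have hinj := (d.compl l.1).1
      have heq := hinj (a₁ := ⟨⟨l.2, ⟨k, hk⟩⟩, ⟨1, d.one_mem _⟩⟩)
        (a₂ := ⟨⟨1, one_mem _⟩, ⟨l.2, hset⟩⟩) (by simp)
      have := congrArg (fun p => (p.1 : G l.1)) heq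
      simpa using this
    exact w.ne_one l hl hone
  have hcomm := base_mul_comm i₀ central w.head
    (lprod φ w.toList * PushoutI.of (φ := φ) i₀ h' * (lprod φ w.toList)⁻¹)
  have hconj : lprod φ w.toList * PushoutI.of (φ := φ) i₀ h' * (lprod φ w.toList)⁻¹ ∈
      (PushoutI.of (φ := φ) i₀).range := by
    have h1 : g * PushoutI.of (φ := φ) i₀ h' * g⁻¹ =
        PushoutI.base φ w.head *
          (lprod φ w.toList * PushoutI.of (φ := φ) i₀ h' * (lprod φ w.toList)⁻¹) *
          (PushoutI.base φ w.head)⁻¹ := by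
      rw [hL]; group
    rw [h1, hcomm, mul_assoc, mul_inv_cancel, mul_one] at hg
    exact hg
  have hall := core hφ i₀ (central i₀) w.toList.length w.toList le_rfl
    w.toWord.chain_ne hr h' hh' hconj
  have hchain := w.toWord.chain_ne
  rcases hlist : w.toList with _ | ⟨l1, _ | ⟨l2, rest⟩⟩
  · rw [hL, hlist]
    simp only [lprod_nil, mul_one]
    exact ⟨φ i₀ w.head, (PushoutI.of_apply_eq_base φ i₀ w.head)⟩
  · obtain ⟨i, x⟩ := l1
    have hi : i = i₀ := hall ⟨i, x⟩ (by rw [hlist]; exact List.mem_singleton_self _)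
    rw [hL, hlist]
    simp only [lprod_cons, lprod_nil, mul_one]
    cases hi
    refine ⟨φ i₀ w.head * x, ?_⟩
    rw [map_mul, PushoutI.of_apply_eq_base]
  · exfalso
    rw [hlist] at hchain
    have h12 := (List.isChain_cons_cons.1 hchain).1
    exact h12 ((hall l1 (by rw [hlist]; simp)).trans (hall l2 (by rw [hlist]; simp)).symm)


end AmalgamHelper

namespace AmalgamHelper

variable {P : Type u} [Group P]

/-- The two-element family of groups `A`, `C`. -/
def Gfam (A C : Subgroup P) : Bool → Type u
  | true => ↥A
  | false => ↥C

instance (A C : Subgroup P) : ∀ b, Group (Gfam A C b)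
  | true => inferInstanceAs (Group ↥A)
  | false => inferInstanceAs (Group ↥C)

/-- The inclusions of `B` into `A` and `C`. -/
def phi {A C B : Subgroup P} (hBA : B ≤ A) (hBC : B ≤ C) : ∀ b, ↥B →* Gfam A C b
  | true => Subgroup.inclusion hBA
  | false => Subgroup.inclusion hBC

/-- The maps from the family back into `P`. -/
def fmap (A C : Subgroup P) : ∀ b, Gfam A C b →* P
  | true => A.subtype
  | false => C.subtype

end AmalgamHelper


/-- If `h ∈ A`, `h ∉ B` and `g ∉ A`, then `g * h * g⁻¹ * h⁻¹ ∉ A`. -/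
theorem commutator_not_mem_of_isCentralAmalgam {P : Type u} [Group P]
    {A C B : Subgroup P} (hAm : IsCentralAmalgam A C B)
    {h : P} (hhA : h ∈ A) (hhB : h ∉ B) {g : P} (hgA : g ∉ A) :
    g * h * g⁻¹ * h⁻¹ ∉ A := by
  classical
  intro hq
  open AmalgamHelper Monoid in
  set φf : ∀ b, ↥B →* Gfam A C b := phi hAm.B_le_A hAm.B_le_C with hφf
  have hinj : ∀ b, Function.Injective (φf b) := by
    intro b
    cases b
    · exact Subgroup.inclusion_injective hAm.B_le_C
    · exact Subgroup.inclusion_injective hAm.B_le_A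
  have hcent : ∀ b (k : ↥B) (a : Gfam A C b), φf b k * a = a * φf b k := by
    intro b
    cases b
    · show ∀ (k : ↥B) (a : ↥C),
        (Subgroup.inclusion hAm.B_le_C) k * a = a * (Subgroup.inclusion hAm.B_le_C) k
      intro k a
      apply Subtype.ext
      exact hAm.central_C k k.2 a a.2
    · show ∀ (k : ↥B) (a : ↥A),
        (Subgroup.inclusion hAm.B_le_A) k * a = a * (Subgroup.inclusion hAm.B_le_A) k
      intro k a
      apply Subtype.ext
      exact hAm.central_A k k.2 a a.2
  set fA : ↥A →* PushoutI φf := PushoutI.of (φ := φf) true with hfA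
  set fC : ↥C →* PushoutI φf := PushoutI.of (φ := φf) false with hfC
  have hcompat : ∀ (b : P) (hb : b ∈ B),
      fA ⟨b, hAm.B_le_A hb⟩ = fC ⟨b, hAm.B_le_C hb⟩ := by
    intro b hb
    have h1 : (⟨b, hAm.B_le_A hb⟩ : ↥A) = φf true ⟨b, hb⟩ := rfl
    have h2 : (⟨b, hAm.B_le_C hb⟩ : ↥C) = φf false ⟨b, hb⟩ := rfl
    rw [h1, h2, hfA, hfC]
    exact (PushoutI.of_apply_eq_base φf true ⟨b, hb⟩).trans
      (PushoutI.of_apply_eq_base φf false ⟨b, hb⟩).symm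
  obtain ⟨ψ, ⟨hψA, hψC⟩, -⟩ :=
    hAm.isPushout (PushoutI φf) fA fC hcompat
  have hkcomm : ∀ b, (fmap A C b).comp (φf b) = B.subtype := by
    intro b
    cases b
    · rfl
    · rfl
  set π : PushoutI φf →* P := PushoutI.lift (fmap A C) B.subtype hkcomm with hπ
  have hπof : ∀ b, π.comp (PushoutI.of b) = fmap A C b := fun b =>
    MonoidHom.ext fun x => PushoutI.lift_of (fmap A C) B.subtype hkcomm x
  -- π ∘ ψ = id
  obtain ⟨χ, -, huniq⟩ := hAm.isPushout P A.subtype C.subtype (fun b hb => rfl)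
  have u1 : π.comp ψ = χ := huniq (π.comp ψ)
    ⟨by rw [MonoidHom.comp_assoc, hψA]; exact hπof true,
      by rw [MonoidHom.comp_assoc, hψC]; exact hπof false⟩
  have u2 : MonoidHom.id P = χ := huniq (MonoidHom.id P)
    ⟨MonoidHom.id_comp _, MonoidHom.id_comp _⟩
  have hπψ : ∀ x, π (ψ x) = x := by
    intro x
    have := u1.trans u2.symm
    exact DFunLike.congr_fun this x
  have hmemA : ∀ {x : P}, ψ x ∈ (PushoutI.of (φ := φf) true).range ↔ x ∈ A := by
    intro x
    constructor
    · rintro ⟨y, hy⟩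
      have h3 : π (PushoutI.of (φ := φf) true y) = A.subtype y :=
        PushoutI.lift_of (fmap A C) B.subtype hkcomm y
      have h4 : x = A.subtype y := by rw [← hπψ x, ← hy, h3]
      rw [h4]
      exact y.2
    · intro hx
      refine ⟨⟨x, hx⟩, ?_⟩
      exact (DFunLike.congr_fun hψA (⟨x, hx⟩ : ↥A)).symm
  -- the letter h
  have hψh : ψ h = PushoutI.of (φ := φf) true ⟨h, hhA⟩ :=
    DFunLike.congr_fun hψA (⟨h, hhA⟩ : ↥A)
  have hh'B : (⟨h, hhA⟩ : Gfam A C true) ∉ (φf true).range := by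
    rintro ⟨k, hk⟩
    apply hhB
    have : h = (k : P) := (congrArg Subtype.val hk).symm
    rw [this]
    exact k.2
  have hconjA : g * h * g⁻¹ ∈ A := by
    have h5 := mul_mem hq hhA
    simpa [mul_assoc] using h5
  have hgconj : ψ g * PushoutI.of (φ := φf) true ⟨h, hhA⟩ * (ψ g)⁻¹ ∈
      (PushoutI.of (φ := φf) true).range := by
    have h6 : ψ (g * h * g⁻¹) = ψ g * PushoutI.of (φ := φf) true ⟨h, hhA⟩ * (ψ g)⁻¹ := by
      rw [map_mul, map_mul, map_inv, hψh]
    rw [← h6]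
    exact hmemA.2 hconjA
  have hgrange := AmalgamHelper.mem_range_of_conj_mem hinj hcent true hh'B hgconj
  exact hgA (hmemA.1 hgrange)
end

section
/- In the setting of the iterated central amalgamation: if a subgroup H of G is spread out, then every non-trivial normal subgroup N of H is spread out. -/
universe u

/-- The subgroup `D` of `G` is the free product of its subgroups `A` and `C` with
amalgamated central subgroup `B`: the cocone of inclusions satisfies the universal
property of the pushout of the two inclusions `B → A` and `B → C`. -/
structure IsCentralAmalgamIn {G : Type u} [Group G] (A C B D : Subgroup G) : Prop where
  A_le : A ≤ D
  C_le : C ≤ D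
  B_le_A : B ≤ A
  B_le_C : B ≤ C
  central_A : ∀ b ∈ B, ∀ a ∈ A, b * a = a * b
  central_C : ∀ b ∈ B, ∀ c ∈ C, b * c = c * b
  isPushout : ∀ (K : Type u) [Group K] (f : ↥A →* K) (g : ↥C →* K),
      (∀ (b : G) (hb : b ∈ B), f ⟨b, B_le_A hb⟩ = g ⟨b, B_le_C hb⟩) →
      ∃! φ : ↥D →* K,
        φ.comp (Subgroup.inclusion A_le) = f ∧ φ.comp (Subgroup.inclusion C_le) = g

/-- The setting of the iterated central amalgamation
`G = ⋃_n (H₀ *_{B₀} H₁ *_{B₁} ⋯ *_{B_{n-1}} H_n)`: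
`B₀ ⊇ B₁ ⊇ ⋯` is a descending sequence of groups with `⋂_n B_n = 1`; for each `n`,
`B_n` is a central subgroup of both `H_n` and `H_{n+1}` with `B_n ≠ H_n` and
`B_n ≠ H_{n+1}`; `G₀ = H₀`, `G_{n+1} = G_n *_{B_n} H_{n+1}` (free product with central
amalgamation) and `G = ⋃_n G_n`.  All groups are realized as subgroups of `G`. -/
structure IteratedAmalgam (G : Type u) [Group G] where
  Gn : ℕ → Subgroup G
  Hn : ℕ → Subgroup G
  Bn : ℕ → Subgroup G
  B_antitone : ∀ n, Bn (n + 1) ≤ Bn n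
  B_iInf : ⨅ n, Bn n = ⊥
  B_le_H : ∀ n, Bn n ≤ Hn n
  B_le_H_succ : ∀ n, Bn n ≤ Hn (n + 1)
  B_central_H : ∀ n, ∀ b ∈ Bn n, ∀ h ∈ Hn n, b * h = h * b
  B_central_H_succ : ∀ n, ∀ b ∈ Bn n, ∀ h ∈ Hn (n + 1), b * h = h * b
  B_ne_H : ∀ n, Bn n ≠ Hn n
  B_ne_H_succ : ∀ n, Bn n ≠ Hn (n + 1)
  G_zero : Gn 0 = Hn 0
  amalgam : ∀ n, IsCentralAmalgamIn (Gn n) (Hn (n + 1)) (Bn n) (Gn (n + 1))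
  iSup_G : ⨆ n, Gn n = ⊤

/-- A subgroup `H` of `G` is *spread out* if `H ⊄ G_n` for every `n`. -/
def IteratedAmalgam.SpreadOut {G : Type u} [Group G] (S : IteratedAmalgam G)
    (H : Subgroup G) : Prop :=
  ∀ n : ℕ, ¬ H ≤ S.Gn n

/-!
### Auxiliary development

We first prove a "Britton's lemma"-style statement for `Monoid.PushoutI`, the indexed
pushout of groups from mathlib: if the base is central in each factor, all maps are
injective, `a` is an element of the factor `G i` not in the image of the base, and
`p` is not in the image of `G i`, then `p * of i a * p⁻¹` is not in the image of `G i`.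
This is then transported along the universal property to `IsCentralAmalgamIn`, and
finally iterated.
-/

namespace SpreadAux

open Monoid Monoid.PushoutI Monoid.PushoutI.NormalWord

variable {ι : Type} {H : Type u} {G : ι → Type u} [Group H] [∀ i, Group (G i)]
variable {φ : ∀ i, H →* G i}

/-- The product of a list of letters in the pushout. -/
def LP (φ : ∀ i, H →* G i) (l : List (Σ i, G i)) : PushoutI φ :=
  (l.map fun x => PushoutI.of x.1 x.2).prod

/-- A reduced list of letters: adjacent indices are distinct and no letter lies in
the image of the base group. -/
def RL (φ : ∀ i, H →* G i) (l : List (Σ i, G i)) : Prop :=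
  l.Chain' (fun x y => x.1 ≠ y.1) ∧ ∀ x ∈ l, x.2 ∉ (φ x.1).range

lemma LP_cons (x : Σ i, G i) (l : List (Σ i, G i)) :
    LP φ (x :: l) = PushoutI.of x.1 x.2 * LP φ l := by simp [LP]

lemma LP_cons' (k : ι) (g : G k) (l : List (Σ i, G i)) :
    LP φ (⟨k, g⟩ :: l) = PushoutI.of k g * LP φ l := by simp [LP]

lemma LP_singleton (k : ι) (g : G k) : LP φ [⟨k, g⟩] = PushoutI.of k g := by simp [LP]

lemma RL.tail {x : Σ i, G i} {l : List (Σ i, G i)} (h : RL φ (x :: l)) : RL φ l :=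
  ⟨h.1.tail, fun y hy => h.2 y (List.mem_cons_of_mem _ hy)⟩

lemma RL.cons' {x : Σ i, G i} {l : List (Σ i, G i)} (hl : RL φ l)
    (hx : x.2 ∉ (φ x.1).range) (hhead : ∀ y ∈ l.head?, x.1 ≠ y.1) :
    RL φ (x :: l) :=
  ⟨List.isChain_cons.2 ⟨hhead, hl.1⟩, by
    intro y hy
    rcases List.mem_cons.1 hy with rfl | hy
    · exact hx
    · exact hl.2 y hy⟩

/-- A reduced list gives a `CoprodI.Word`. -/
def toWord {l : List (Σ i, G i)} (hl : RL φ l) : CoprodI.Word G where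
  toList := l
  ne_one := fun x hx h1 => hl.2 x hx (h1 ▸ one_mem _)
  chain_ne := hl.1

lemma LP_eq_toWord {l : List (Σ i, G i)} (hl : RL φ l) :
    ofCoprodI (toWord hl).prod = LP φ l := by
  simp only [CoprodI.Word.prod, toWord, LP, map_list_prod, List.map_map]
  rfl

/-- A nonempty reduced word does not represent an element of the base group. -/
lemma LP_not_mem_base (hφ : ∀ i, Function.Injective (φ i)) {l : List (Σ i, G i)}
    (hl : RL φ l) (hne : l ≠ []) : LP φ l ∉ (PushoutI.base φ).range := by
  intro hmem
  have hred : Reduced φ (toWord hl) := fun g hg => hl.2 g hg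
  have hempty := hred.eq_empty_of_mem_range hφ (by rwa [LP_eq_toWord hl])
  exact hne (congrArg CoprodI.Word.toList hempty)

/-- Classification of reduced lists whose product lies in the image of one factor:
they consist of a single letter from that factor. -/
lemma LP_mem_of_range (hφ : ∀ i, Function.Injective (φ i)) {l : List (Σ i, G i)}
    (hl : RL φ l) (hne : l ≠ []) {k : ι}
    (h : LP φ l ∈ (PushoutI.of (φ := φ) k).range) : ∃ g : G k, l = [⟨k, g⟩] := by
  obtain ⟨c, hc⟩ := h
  have hcr : c ∉ (φ k).range := by
    rintro ⟨y, rfl⟩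
    exact LP_not_mem_base hφ hl hne (hc ▸ (of_apply_eq_base φ k y ▸ ⟨y, rfl⟩))
  obtain ⟨⟨i, g⟩, l', rfl⟩ := List.exists_cons_of_ne_nil hne
  have hik : i = k := by
    by_contra hik
    have hrl : RL φ (⟨k, c⁻¹⟩ :: ⟨i, g⟩ :: l') :=
      RL.cons' hl (by rw [Subgroup.inv_mem_iff]; exact hcr) (by simp [Ne.symm hik])
    refine LP_not_mem_base hφ hrl (by simp) ?_
    rw [LP_cons]
    dsimp only
    rw [← hc, ← map_mul, inv_mul_cancel, map_one]
    exact one_mem _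
  subst hik
  rw [LP_cons] at hc
  dsimp only at hc
  have hLPl' : LP φ l' = PushoutI.of i (g⁻¹ * c) := by
    rw [map_mul, map_inv, hc]
    group
  rcases eq_or_ne l' [] with rfl | hl'ne
  · exact ⟨g, rfl⟩
  exfalso
  have hl'' : RL φ l' := hl.tail
  by_cases hgc : g⁻¹ * c ∈ (φ i).range
  · obtain ⟨y, hy⟩ := hgc
    refine LP_not_mem_base hφ hl'' hl'ne ⟨y, ?_⟩
    rw [← of_apply_eq_base, hy, ← hLPl']
  · obtain ⟨⟨j, g'⟩, l'', rfl⟩ := List.exists_cons_of_ne_nil hl'ne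
    have hji : j ≠ i := by
      have := hl.1
      rw [List.Chain', List.isChain_cons_cons] at this
      exact Ne.symm this.1
    have hrl : RL φ (⟨i, (g⁻¹ * c)⁻¹⟩ :: ⟨j, g'⟩ :: l'') :=
      RL.cons' hl'' (by rw [Subgroup.inv_mem_iff]; exact hgc) (by simp [Ne.symm hji])
    refine LP_not_mem_base hφ hrl (by simp) ?_
    rw [LP_cons]
    dsimp only
    rw [hLPl', ← map_mul, inv_mul_cancel, map_one]
    exact one_mem _

/-- If the base is central in each factor then it is central in the pushout. -/
lemma base_central (i₀ : ι)
    (hc : ∀ (i : ι) (h : H) (g : G i), φ i h * g = g * φ i h)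
    (h : H) (p : PushoutI φ) : PushoutI.base φ h * p = p * PushoutI.base φ h := by
  induction p using PushoutI.induction_on with
  | of i g => rw [← of_apply_eq_base φ i h, ← map_mul, ← map_mul, hc]
  | base h' =>
    rw [← of_apply_eq_base φ i₀ h, ← of_apply_eq_base φ i₀ h', ← map_mul, ← map_mul,
      map_mul (φ i₀) h h', hc, map_mul]
  | mul x y hx hy => rw [← mul_assoc, hx, mul_assoc, hy, mul_assoc]

/-- Every element of the pushout is a base element times the product of a reduced word. -/
lemma exists_repr (hφ : ∀ i, Function.Injective (φ i)) (p : PushoutI φ) :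
    ∃ (l : List (Σ i, G i)) (h : H), RL φ l ∧ p = PushoutI.base φ h * LP φ l := by
  classical
  obtain ⟨d⟩ := _root_.Monoid.PushoutI.NormalWord.transversal_nonempty φ hφ
  let w : PushoutI.NormalWord d := p • (PushoutI.NormalWord.empty : PushoutI.NormalWord d)
  have hprod : w.prod = p := by
    rw [PushoutI.NormalWord.prod_smul, PushoutI.NormalWord.prod_empty, mul_one]
  refine ⟨w.toList, w.head, ⟨w.toWord.chain_ne, ?_⟩, ?_⟩
  · rintro ⟨i, g⟩ hg ⟨y, hy⟩
    dsimp only at hy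
    rw [← hy] at hg
    have hset : φ i y ∈ d.set i := w.normalized i _ hg
    have hne1 : φ i y ≠ 1 := w.toWord.ne_one _ hg
    have hinj := (d.compl i).1
    have h1 : ((⟨⟨φ i y, ⟨y, rfl⟩⟩, ⟨1, d.one_mem i⟩⟩ : ((φ i).range : Set (G i)) × (d.set i)))
        = ⟨⟨1, one_mem _⟩, ⟨φ i y, hset⟩⟩ := by
      apply hinj
      simp
    have := congrArg (fun x => (x.2 : G i)) h1
    simp at this
    exact hne1 this.symm
  · rw [← hprod]
    show PushoutI.NormalWord.prod w = _
    rw [PushoutI.NormalWord.prod]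
    congr 1
    simp only [CoprodI.Word.prod, LP, map_list_prod, List.map_map]
    rfl

/-- The key combinatorial lemma: conjugating a letter `of i a` (with `a` not in the
base) by the product of a reduced word is represented by a nonempty reduced word,
which is a single letter only if the conjugating word lies in the factor `G i`. -/
lemma conj_repr (hφ : ∀ i, Function.Injective (φ i))
    (hc : ∀ (i : ι) (h : H) (g : G i), φ i h * g = g * φ i h)
    {i : ι} (a : G i) (ha : a ∉ (φ i).range) :
    ∀ l : List (Σ i, G i), RL φ l →
      ∃ v : List (Σ i, G i), RL φ v ∧ v ≠ [] ∧
        LP φ v = LP φ l * PushoutI.of i a * (LP φ l)⁻¹ ∧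
        (∀ x : Σ i, G i, v = [x] → x.1 = i ∧ LP φ l ∈ (PushoutI.of (φ := φ) i).range) ∧
        (∀ x ∈ v.head?, ∀ y ∈ l.head?, x.1 = y.1) ∧
        (∀ x ∈ v.head?, ∀ y ∈ v.getLast?, x.1 = y.1) := by
  intro l
  induction l with
  | nil =>
    intro _
    refine ⟨[⟨i, a⟩], ⟨List.isChain_singleton _, by simpa using ha⟩, by simp,
      by simp [LP], ?_, by simp, by simp⟩
    rintro x hx
    simp only [List.cons.injEq, and_true] at hx
    subst hx
    exact ⟨rfl, one_mem _⟩
  | cons x l' ih =>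
    obtain ⟨k, g⟩ := x
    intro hl
    have hl' : RL φ l' := hl.tail
    have hg : g ∉ (φ k).range := hl.2 ⟨k, g⟩ List.mem_cons_self
    obtain ⟨v', hv', hv'ne, hLPv', hsing', hhead', hlast'⟩ := ih hl'
    rcases hv'c : v' with _ | ⟨⟨m, b⟩, rest⟩
    · exact absurd hv'c hv'ne
    subst hv'c
    rcases hrest : rest with _ | ⟨z, t⟩
    · -- singleton case : v' = [⟨m, b⟩]
      subst hrest
      obtain ⟨hmi, hLl'⟩ := hsing' ⟨m, b⟩ rfl
      dsimp only at hmi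
      subst hmi
      have hb : b ∉ (φ m).range := hv'.2 ⟨m, b⟩ (by simp)
      rw [LP_singleton] at hLPv'
      by_cases hki : k = m
      · subst hki
        refine ⟨[⟨k, g * b * g⁻¹⟩], ⟨List.isChain_singleton _, ?_⟩, by simp, ?_, ?_,
          by simp, by simp⟩
        · rintro y hy ⟨z, hz⟩
          simp only [List.mem_singleton] at hy
          subst hy
          dsimp only at hz
          apply hb
          refine ⟨z, ?_⟩
          have hzz : φ k z * g = g * φ k z := hc k z g
          calc φ k z = g⁻¹ * (g * φ k z) := by group
            _ = g⁻¹ * (φ k z * g) := by rw [hzz]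
            _ = g⁻¹ * (g * b * g⁻¹ * g) := by rw [hz]
            _ = b := by group
        · rw [LP_singleton, LP_cons' k g l', map_mul, map_mul, map_inv, hLPv']
          group
        · rintro y hy
          simp only [List.cons.injEq, and_true] at hy
          subst hy
          refine ⟨rfl, ?_⟩
          rw [LP_cons']
          exact mul_mem ⟨g, rfl⟩ hLl'
      · refine ⟨[⟨k, g⟩, ⟨m, b⟩, ⟨k, g⁻¹⟩], ⟨?_, ?_⟩, by simp, ?_, by simp, ?_, by simp⟩
        · exact List.isChain_cons_cons.2 ⟨hki, List.isChain_cons_cons.2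
            ⟨fun h => hki h.symm, List.isChain_singleton _⟩⟩
        · rintro y hy
          simp only [List.mem_cons, List.not_mem_nil, or_false] at hy
          rcases hy with rfl | rfl | rfl
          · exact hg
          · exact hb
          · rw [Subgroup.inv_mem_iff]; exact hg
        · rw [LP_cons' k g [⟨m, b⟩, ⟨k, g⁻¹⟩], LP_cons' m b [⟨k, g⁻¹⟩],
            LP_singleton k g⁻¹, LP_cons' k g l', hLPv', map_inv]
          group
        · intro y hy
          simp only [List.head?_cons, Option.mem_some_iff] at hy
          subst hy
          simp
    · -- long case : v' has at least two letters
      subst hrest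
      have hl'ne : l' ≠ [] := by
        rintro rfl
        have hmem : LP φ (⟨m, b⟩ :: z :: t) ∈ (PushoutI.of (φ := φ) i).range := by
          rw [hLPv']
          simp only [LP, List.map_nil, List.prod_nil]
          exact ⟨a, by group⟩
        obtain ⟨g', hg'⟩ := LP_mem_of_range hφ hv' (by simp) hmem
        simp at hg'
      obtain ⟨y', t', rfl⟩ := List.exists_cons_of_ne_nil hl'ne
      have hky' : k ≠ y'.1 := by
        have := (List.isChain_cons_cons.1 hl.1).1
        exact this
      have hym : m = y'.1 := hhead' ⟨m, b⟩ rfl y' rfl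
      have hkm : k ≠ m := fun h => hky' (h ▸ hym ▸ rfl)
      have hlastv' : ∀ w ∈ (⟨m, b⟩ :: z :: t : List (Σ i, G i)).getLast?, k ≠ w.1 := by
        intro w hw
        have := hlast' ⟨m, b⟩ rfl w hw
        dsimp only at this
        rw [← this]
        exact hkm
      refine ⟨⟨k, g⟩ :: ((⟨m, b⟩ :: z :: t) ++ [⟨k, g⁻¹⟩]), ⟨?_, ?_⟩, by simp, ?_,
        by simp, ?_, ?_⟩
      · rw [List.Chain', List.isChain_cons]
        constructor
        · intro w hw
          simp only [List.cons_append, List.head?_cons, Option.mem_some_iff] at hw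
          subst hw
          exact hkm
        · rw [List.isChain_append]
          refine ⟨hv'.1, List.isChain_singleton _, ?_⟩
          intro w hw u hu
          simp only [List.head?_cons, Option.mem_some_iff] at hu
          subst hu
          exact fun h => hlastv' w hw h.symm
      · intro w hw
        simp only [List.mem_cons, List.mem_append, List.not_mem_nil, or_false,
          List.mem_singleton] at hw
        rcases hw with rfl | hw | rfl
        · exact hg
        · exact hv'.2 w (by simpa using hw)
        · rw [Subgroup.inv_mem_iff]; exact hg
      · have happ : LP φ ((⟨m, b⟩ :: z :: t) ++ [⟨k, g⁻¹⟩])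
            = LP φ (⟨m, b⟩ :: z :: t) * PushoutI.of k g⁻¹ := by
          simp [LP, mul_assoc]
        rw [LP_cons', happ, hLPv', LP_cons' k g (y' :: t')]
        rw [map_inv, mul_inv_rev]
        group
      · intro w hw u hu
        simp only [List.cons_append, List.head?_cons, Option.mem_some_iff] at hw hu
        subst hw; subst hu; rfl
      · intro w hw u hu
        simp only [List.cons_append, List.head?_cons, Option.mem_some_iff] at hw
        subst hw
        have : (⟨k, g⟩ :: ((⟨m, b⟩ :: z :: t) ++ [⟨k, g⁻¹⟩]) : List (Σ i, G i))
            = (⟨k, g⟩ :: ⟨m, b⟩ :: z :: t) ++ [⟨k, g⁻¹⟩] := by simp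
        rw [this, List.getLast?_concat] at hu
        simp only [Option.mem_some_iff] at hu
        subst hu
        rfl

/-- Britton-style lemma for central pushouts of groups. -/
lemma conj_not_mem_of_range (hφ : ∀ i, Function.Injective (φ i))
    (hc : ∀ (i : ι) (h : H) (g : G i), φ i h * g = g * φ i h)
    {i : ι} (a : G i) (ha : a ∉ (φ i).range)
    {p : PushoutI φ} (hp : p ∉ (PushoutI.of (φ := φ) i).range) :
    p * PushoutI.of i a * p⁻¹ ∉ (PushoutI.of (φ := φ) i).range := by
  obtain ⟨l, h, hl, rfl⟩ := exists_repr hφ p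
  intro hmem
  have hcomm := base_central i hc h
  have heq : (PushoutI.base φ h * LP φ l) * PushoutI.of i a * (PushoutI.base φ h * LP φ l)⁻¹
      = LP φ l * PushoutI.of i a * (LP φ l)⁻¹ := by
    calc (PushoutI.base φ h * LP φ l) * PushoutI.of i a * (PushoutI.base φ h * LP φ l)⁻¹
        = PushoutI.base φ h * (LP φ l * PushoutI.of i a * (LP φ l)⁻¹)
          * (PushoutI.base φ h)⁻¹ := by group
      _ = (LP φ l * PushoutI.of i a * (LP φ l)⁻¹) * PushoutI.base φ h
          * (PushoutI.base φ h)⁻¹ := by rw [hcomm]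
      _ = LP φ l * PushoutI.of i a * (LP φ l)⁻¹ := by group
  rw [heq] at hmem
  obtain ⟨v, hv, hvne, hLPv, hsing, -, -⟩ := conj_repr hφ hc a ha l hl
  rw [← hLPv] at hmem
  obtain ⟨g', hg'⟩ := LP_mem_of_range hφ hv hvne hmem
  obtain ⟨-, hLl⟩ := hsing ⟨i, g'⟩ hg'
  exact hp (mul_mem ⟨φ i h, of_apply_eq_base φ i h⟩ hLl)

variable {Γ : Type u} [Group Γ]

/-- The two factors of an amalgam, as a `Bool`-indexed family. -/
def Fac (A C : Subgroup Γ) : Bool → Type u := fun b =>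
  Bool.rec (motive := fun _ => Type u) (↥C) (↥A) b

instance (A C : Subgroup Γ) : ∀ b, Group (Fac A C b) := fun b =>
  Bool.rec (motive := fun b => Group (Fac A C b))
    (inferInstance : Group ↥C) (inferInstance : Group ↥A) b

/-- The inclusions of the base into the two factors. -/
def fmap {A C B : Subgroup Γ} (hA : B ≤ A) (hC : B ≤ C) : ∀ b, ↥B →* Fac A C b := fun b =>
  Bool.rec (motive := fun b => ↥B →* Fac A C b)
    (Subgroup.inclusion hC) (Subgroup.inclusion hA) b

set_option maxHeartbeats 1000000 in
/-- Britton-style lemma for `IsCentralAmalgamIn`: an element of `A \ B` conjugated by an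
element of `D \ A` is not in `A`. -/
theorem _root_.IsCentralAmalgamIn.conj_not_mem {A C B D : Subgroup Γ}
    (h : IsCentralAmalgamIn A C B D) {x : Γ} (hxA : x ∈ A) (hxB : x ∉ B)
    {g : Γ} (hgD : g ∈ D) (hgA : g ∉ A) : g * x * g⁻¹ ∉ A := by
  classical
  let φ : ∀ b, ↥B →* Fac A C b := fmap h.B_le_A h.B_le_C
  have hφinj : ∀ b, Function.Injective (φ b) := by
    intro b
    cases b
    · exact Subgroup.inclusion_injective h.B_le_C
    · exact Subgroup.inclusion_injective h.B_le_A
  have hφc : ∀ (b : Bool) (y : ↥B) (z : Fac A C b), φ b y * z = z * φ b y := by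
    intro b
    cases b
    · intro y
      exact fun z : ↥C => Subtype.ext (h.central_C y y.2 z z.2)
    · intro y
      exact fun z : ↥A => Subtype.ext (h.central_A y y.2 z z.2)
  -- the map from the pushout to D
  let ψ : PushoutI φ →* ↥D := PushoutI.lift
    (fun b => Bool.rec (motive := fun b => Fac A C b →* ↥D)
      (Subgroup.inclusion h.C_le) (Subgroup.inclusion h.A_le) b)
    (Subgroup.inclusion (h.B_le_A.trans h.A_le))
    (by intro b; cases b <;> (ext y; rfl))
  have hψA : ψ.comp (PushoutI.of (φ := φ) true) = Subgroup.inclusion h.A_le := by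
    ext y
    simp [ψ, PushoutI.lift_of]
  have hψC : ψ.comp (PushoutI.of (φ := φ) false) = Subgroup.inclusion h.C_le := by
    ext y
    simp [ψ, PushoutI.lift_of]
  -- the map from D to the pushout
  have key : ∀ (b : Γ) (hb : b ∈ B),
      (PushoutI.of (φ := φ) true ⟨b, h.B_le_A hb⟩ : PushoutI φ)
        = PushoutI.of (φ := φ) false ⟨b, h.B_le_C hb⟩ := by
    intro b hb
    have h1 : (⟨b, h.B_le_A hb⟩ : ↥A) = φ true ⟨b, hb⟩ := Subtype.ext rfl
    have h2 : (⟨b, h.B_le_C hb⟩ : ↥C) = φ false ⟨b, hb⟩ := Subtype.ext rfl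
    rw [h1, h2, PushoutI.of_apply_eq_base φ true, PushoutI.of_apply_eq_base φ false]
  obtain ⟨χ, ⟨hχA, hχC⟩, -⟩ :=
    h.isPushout (PushoutI φ) (PushoutI.of (φ := φ) true) (PushoutI.of (φ := φ) false) key
  obtain ⟨θ, -, hθuniq⟩ := h.isPushout (↥D) (Subgroup.inclusion h.A_le)
    (Subgroup.inclusion h.C_le) (fun b hb => Subtype.ext rfl)
  have hid : ψ.comp χ = MonoidHom.id ↥D := by
    have e1 : ψ.comp χ = θ := by
      apply hθuniq
      constructor
      · rw [MonoidHom.comp_assoc, hχA]; exact hψA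
      · rw [MonoidHom.comp_assoc, hχC]; exact hψC
    have e2 : MonoidHom.id ↥D = θ := by
      apply hθuniq
      constructor <;> ext y <;> rfl
    rw [e1, e2]
  have hretr : ∀ d : ↥D, ψ (χ d) = d := fun d => DFunLike.congr_fun hid d
  have hχinj : Function.Injective χ := fun d₁ d₂ hd => by
    rw [← hretr d₁, ← hretr d₂, hd]
  have memA_iff : ∀ d : ↥D, (d : Γ) ∈ A ↔ χ d ∈ (PushoutI.of (φ := φ) true).range := by
    intro d
    constructor
    · intro hd
      refine ⟨⟨(d : Γ), hd⟩, ?_⟩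
      have h2 : Subgroup.inclusion h.A_le (⟨(d : Γ), hd⟩ : ↥A) = d := Subtype.ext rfl
      rw [← hχA]
      exact congrArg χ h2
    · rintro ⟨y, hy⟩
      rw [← hχA] at hy
      change χ (Subgroup.inclusion h.A_le y) = χ d at hy
      rw [← hχinj hy]
      exact y.2
  have ha : (⟨x, hxA⟩ : ↥A) ∉ (φ true).range := by
    rintro ⟨y, hy⟩
    apply hxB
    have hval : (y : Γ) = x := congrArg Subtype.val hy
    rw [← hval]
    exact y.2
  have hp : χ ⟨g, hgD⟩ ∉ (PushoutI.of (φ := φ) true).range := fun hmem =>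
    hgA ((memA_iff ⟨g, hgD⟩).2 hmem)
  have hχx : χ ⟨x, h.A_le hxA⟩ = PushoutI.of (φ := φ) true (⟨x, hxA⟩ : ↥A) := by
    have h2 : Subgroup.inclusion h.A_le (⟨x, hxA⟩ : ↥A) = ⟨x, h.A_le hxA⟩ := Subtype.ext rfl
    rw [← h2, ← MonoidHom.comp_apply, hχA]
    rfl
  intro hconj
  have hcoe : ((⟨g, hgD⟩ * ⟨x, h.A_le hxA⟩ * (⟨g, hgD⟩ : ↥D)⁻¹ : ↥D) : Γ) = g * x * g⁻¹ := by
    simp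
  have hd'A : ((⟨g, hgD⟩ * ⟨x, h.A_le hxA⟩ * (⟨g, hgD⟩ : ↥D)⁻¹ : ↥D) : Γ) ∈ A := by
    rw [hcoe]; exact hconj
  obtain ⟨d', hd'⟩ : ∃ d' : ↥D, d' = ⟨g, hgD⟩ * ⟨x, h.A_le hxA⟩ * (⟨g, hgD⟩ : ↥D)⁻¹ :=
    ⟨_, rfl⟩
  rw [← hd'] at hd'A
  have hmem := (memA_iff d').1 hd'A
  rw [hd', map_mul, map_mul, map_inv, hχx] at hmem
  have hres := conj_not_mem_of_range hφinj hφc (i := true) (⟨x, hxA⟩ : ↥A) ha hp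
  exact hres hmem

/-! ### Iterating the amalgam -/

lemma Gn_mono (S : IteratedAmalgam Γ) : Monotone S.Gn :=
  monotone_nat_of_le_succ fun n => (S.amalgam n).A_le

lemma Bn_anti (S : IteratedAmalgam Γ) : Antitone S.Bn :=
  antitone_nat_of_succ_le S.B_antitone

lemma key_conj (S : IteratedAmalgam Γ) (k : ℕ) {x : Γ} (hx : x ∈ S.Gn k)
    (hxB : ∀ j, k ≤ j → x ∉ S.Bn j) :
    ∀ K, ∀ g ∈ S.Gn K, g ∉ S.Gn k → g * x * g⁻¹ ∉ S.Gn k := by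
  intro K
  induction K with
  | zero =>
    intro g hg hgk
    exact absurd (Gn_mono S (Nat.zero_le k) hg) hgk
  | succ K ih =>
    intro g hgK hgk
    by_cases hgK' : g ∈ S.Gn K
    · exact ih g hgK' hgk
    · have hkK : k ≤ K := by
        by_contra hlt
        push_neg at hlt
        exact hgk (Gn_mono S (by omega : K + 1 ≤ k) hgK)
      have hconj := (S.amalgam K).conj_not_mem (Gn_mono S hkK hx) (hxB K hkK) hgK hgK'
      exact fun hmem => hconj (Gn_mono S hkK hmem)

end SpreadAux

/-- If a subgroup `H` of `G` is spread out, then every non-trivial normal subgroup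
`N` of `H` is spread out. -/
theorem spreadOut_of_normal_of_spreadOut {G : Type u} [Group G]
    (S : IteratedAmalgam G) (H : Subgroup G) (hH : S.SpreadOut H)
    (N : Subgroup G) (hNH : N ≤ H)
    (hNnormal : ∀ g ∈ H, ∀ x ∈ N, g * x * g⁻¹ ∈ N)
    (hNbot : N ≠ ⊥) :
    S.SpreadOut N := by
  intro n hNle
  obtain ⟨x, hxN, hx1⟩ : ∃ x ∈ N, x ≠ 1 := by
    by_contra hcon
    push_neg at hcon
    exact hNbot ((Subgroup.eq_bot_iff_forall N).2 hcon)
  obtain ⟨m, hxm⟩ : ∃ m, x ∉ S.Bn m := by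
    by_contra hcon
    push_neg at hcon
    apply hx1
    have : x ∈ ⨅ j, S.Bn j := Subgroup.mem_iInf.2 hcon
    rwa [S.B_iInf, Subgroup.mem_bot] at this
  have hxk : ∀ j, max n m ≤ j → x ∉ S.Bn j := fun j hj hmem =>
    hxm (SpreadAux.Bn_anti S (le_trans (le_max_right n m) hj) hmem)
  have hxGk : x ∈ S.Gn (max n m) := SpreadAux.Gn_mono S (le_max_left n m) (hNle hxN)
  obtain ⟨g, hgH, hgk⟩ : ∃ g ∈ H, g ∉ S.Gn (max n m) := by
    have hnot := hH (max n m)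
    rw [SetLike.not_le_iff_exists] at hnot
    exact hnot
  obtain ⟨K, hgK⟩ : ∃ K, g ∈ S.Gn K := by
    have hdir : Directed (· ≤ ·) S.Gn := (SpreadAux.Gn_mono S).directed_le
    have hg : g ∈ ⨆ i, S.Gn i := by rw [S.iSup_G]; trivial
    exact (Subgroup.mem_iSup_of_directed hdir).1 hg
  have hconjN : g * x * g⁻¹ ∈ N := hNnormal g hgH x hxN
  exact SpreadAux.key_conj S (max n m) hxGk hxk K g hgK hgk
    (SpreadAux.Gn_mono S (le_max_left n m) (hNle hconjN))
end

section
/- In the setting of the iterated central amalgamation: if a subgroup H of G is spread out and N is a non-trivial normal subgroup of H, then for every k ∈ ℕ₀ there exist h ∈ N and g ∈ H such that the commutator g·h·g⁻¹·h⁻¹ does not lie in G_k. -/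
universe u

namespace AmalgAux
open Monoid PushoutI Function

variable {ι : Type} {G : ι → Type u} [∀ i, Group (G i)]
  {H : Type u} [Group H] {φ : ∀ i, H →* G i}

def prodL (φ : ∀ i, H →* G i) (l : List (Σ i, G i)) : PushoutI φ :=
  (l.map fun x => of x.1 x.2).prod

def Red (φ : ∀ i, H →* G i) (l : List (Σ i, G i)) : Prop :=
  (∀ x ∈ l, x.2 ∉ (φ x.1).range) ∧ l.Chain' fun a b => a.1 ≠ b.1

@[simp] theorem prodL_nil : prodL φ [] = 1 := rfl

@[simp] theorem prodL_cons (x : (Σ i, G i)) (l : List (Σ i, G i)) :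
    prodL φ (x :: l) = of x.1 x.2 * prodL φ l := by
  simp [prodL]

theorem prodL_append (l₁ l₂ : List (Σ i, G i)) :
    prodL φ (l₁ ++ l₂) = prodL φ l₁ * prodL φ l₂ := by
  simp [prodL]

theorem red_not_base (hφ : ∀ i, Injective (φ i)) {l : List (Σ i, G i)}
    (hl : Red φ l) (hne : l ≠ []) : prodL φ l ∉ (base φ).range := by
  intro hmem
  have hne1 : ∀ x ∈ l, x.2 ≠ 1 := fun x hx h1 => hl.1 x hx (h1 ▸ one_mem _)
  let w : CoprodI.Word G := ⟨l, hne1, hl.2⟩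
  have hred : Reduced φ w := fun x hx => hl.1 x hx
  have hprod : ofCoprodI w.prod = prodL φ l := by
    simp [CoprodI.Word.prod, prodL, map_list_prod, List.map_map, Function.comp_def]
    rfl
  have hempty := hred.eq_empty_of_mem_range hφ (by rw [hprod]; exact hmem)
  exact hne (congrArg CoprodI.Word.toList hempty)

theorem red_not_of (hφ : ∀ i, Injective (φ i)) {l : List (Σ i, G i)}
    (hl : Red φ l) (h2 : 2 ≤ l.length) (j : ι) : prodL φ l ∉ (of j).range := by
  rintro ⟨y, hy⟩
  match l, hl, h2, hy with
  | ⟨i₁, c₁⟩ :: x₂ :: r, hl, _, hy =>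
  have h12 : i₁ ≠ x₂.1 := (List.isChain_cons.mp hl.2).1 x₂ rfl
  have htailred : Red φ (x₂ :: r) :=
    ⟨fun z hz => hl.1 z (List.mem_cons_of_mem _ hz), (List.isChain_cons.mp hl.2).2⟩
  by_cases hyr : y ∈ (φ j).range
  · obtain ⟨b, rfl⟩ := hyr
    rw [of_apply_eq_base] at hy
    exact red_not_base hφ hl (by simp) ⟨b, hy⟩
  · by_cases hij : j = i₁
    · subst hij
      rw [prodL_cons] at hy
      have htail : prodL φ (x₂ :: r) = of j (c₁⁻¹ * y) := by
        rw [map_mul, map_inv, hy, inv_mul_cancel_left]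
      by_cases hb : c₁⁻¹ * y ∈ (φ j).range
      · obtain ⟨b, hb⟩ := hb
        rw [← hb, of_apply_eq_base] at htail
        exact red_not_base hφ htailred (by simp) ⟨b, htail.symm⟩
      · have hred' : Red φ (⟨j, (c₁⁻¹ * y)⁻¹⟩ :: x₂ :: r) := by
          refine ⟨?_, List.isChain_cons.mpr ⟨fun z hz => ?_, htailred.2⟩⟩
          · rintro z hz
            rcases List.mem_cons.mp hz with rfl | hz
            · exact fun hmem => hb (by simpa using (φ j).range.inv_mem hmem)
            · exact htailred.1 z hz
          · obtain rfl : x₂ = z := by simpa using hz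
            exact h12
        have hone : prodL φ (⟨j, (c₁⁻¹ * y)⁻¹⟩ :: x₂ :: r) = 1 := by
          rw [prodL_cons, htail, ← map_mul, inv_mul_cancel, map_one]
        exact red_not_base hφ hred' (by simp) ⟨1, by rw [hone, map_one]⟩
    · have hred' : Red φ (⟨j, y⁻¹⟩ :: ⟨i₁, c₁⟩ :: x₂ :: r) := by
        refine ⟨?_, List.isChain_cons.mpr ⟨fun z hz => ?_, hl.2⟩⟩
        · rintro z hz
          rcases List.mem_cons.mp hz with rfl | hz
          · exact fun hmem => hyr (by simpa using (φ j).range.inv_mem hmem)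
          · exact hl.1 z hz
        · obtain rfl : (⟨i₁, c₁⟩ : Σ i, G i) = z := by simpa using hz
          exact hij
      have hone : prodL φ (⟨j, y⁻¹⟩ :: ⟨i₁, c₁⟩ :: x₂ :: r) = 1 := by
        rw [prodL_cons, ← hy, ← map_mul, inv_mul_cancel, map_one]
      exact red_not_base hφ hred' (by simp) ⟨1, by rw [hone, map_one]⟩

def Ends (l : List (Σ i, G i)) (e : ι) : Prop :=
  l.head?.map Sigma.fst = some e ∧ l.getLast?.map Sigma.fst = some e

theorem conj_not_range (hc : ∀ i (h : H) (g : G i), φ i h * g = g * φ i h)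
    {i : ι} {b : G i} (hb : b ∉ (φ i).range) (c : G i) :
    c⁻¹ * b * c ∉ (φ i).range := by
  rintro ⟨h, hh⟩
  refine hb ⟨h, ?_⟩
  have h1 : c * φ i h * c⁻¹ = φ i h := by rw [← hc i h c]; group
  rw [← h1, hh]; group

theorem conj_core (hφ : ∀ i, Injective (φ i))
    (hc : ∀ i (h : H) (g : G i), φ i h * g = g * φ i h)
    (l : List (Σ i, G i)) : Red φ l →
    ∀ (m : List (Σ i, G i)) (e : ι), Red φ m → Ends m e →
    (∀ x, l.head? = some x → 1 < m.length → x.1 ≠ e) →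
    ∃ (m' : List (Σ i, G i)) (e' : ι), Red φ m' ∧ Ends m' e' ∧
      prodL φ m' = (prodL φ l)⁻¹ * prodL φ m * prodL φ l ∧
      (m'.length = 1 → m.length = 1 ∧ e' = e ∧ ∀ x ∈ l, x.1 = e) := by
  induction l with
  | nil =>
    intro _ m e hm he _
    exact ⟨m, e, hm, he, by simp, fun h => ⟨h, rfl, by simp⟩⟩
  | cons x l ih =>
    rintro hred m e hm hends hcompat
    obtain ⟨t, c⟩ := x
    have hcr : c ∉ (φ t).range := hred.1 ⟨t, c⟩ (List.mem_cons_self)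
    have hlred : Red φ l :=
      ⟨fun z hz => hred.1 z (List.mem_cons_of_mem _ hz), (List.isChain_cons.mp hred.2).2⟩
    have hhead : ∀ u ∈ l.head?, t ≠ u.1 := (List.isChain_cons.mp hred.2).1
    match m, hm, hends, hcompat with
    | [], _, hends, _ => simp [Ends] at hends
    | ⟨s, b⟩ :: m₂, hm, hends, hcompat =>
    obtain rfl : s = e := by simpa [Ends] using hends.1
    match m₂, hm, hends, hcompat with
    | [], hm, hends, hcompat =>
      have hbr : b ∉ (φ s).range := hm.1 ⟨s, b⟩ (List.mem_cons_self)
      by_cases hte : t = s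
      · subst hte
        obtain ⟨m', e', h1, h2, h3, h4⟩ := ih hlred [⟨t, c⁻¹ * b * c⟩] t
          ⟨fun z hz => by
            rcases List.mem_singleton.mp hz with rfl
            exact conj_not_range hc hbr c, List.isChain_singleton _⟩
          (by simp [Ends])
          (fun u hu h1 => by simp at h1)
        refine ⟨m', e', h1, h2, ?_, ?_⟩
        · rw [h3]
          simp only [prodL_cons, prodL_nil, map_mul, map_inv]
          group
        · intro hlen
          obtain ⟨-, rfl, hall⟩ := h4 hlen
          refine ⟨rfl, rfl, fun z hz => ?_⟩
          rcases List.mem_cons.mp hz with rfl | hz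
          · rfl
          · exact hall z hz
      · obtain ⟨m', e', h1, h2, h3, h4⟩ := ih hlred [⟨t, c⁻¹⟩, ⟨s, b⟩, ⟨t, c⟩] t
          ⟨fun z hz => by
            rcases List.mem_cons.mp hz with rfl | hz
            · exact fun hmem => hcr (by simpa using (φ t).range.inv_mem hmem)
            rcases List.mem_cons.mp hz with rfl | hz
            · exact hbr
            rcases List.mem_singleton.mp hz with rfl
            · exact hcr,
           List.isChain_cons.mpr ⟨fun y hy => by
              obtain rfl : (⟨s, b⟩ : Σ i, G i) = y := by simpa using hy
              exact hte,
            List.isChain_cons.mpr ⟨fun y hy => by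
              obtain rfl : (⟨t, c⟩ : Σ i, G i) = y := by simpa using hy
              exact fun h => hte h.symm, List.isChain_singleton _⟩⟩⟩
          (by simp [Ends])
          (fun u hu _ => (hhead u hu).symm)
        refine ⟨m', e', h1, h2, ?_, fun hlen => absurd (h4 hlen).1 (by simp)⟩
        rw [h3]
        simp only [prodL_cons, prodL_nil, map_inv]
        group
    | x₂ :: m₃, hm, hends, hcompat =>
      have hte : t ≠ s := hcompat ⟨t, c⟩ rfl (by simp)
      have hlast : (⟨s, b⟩ :: x₂ :: m₃).getLast?.map Sigma.fst = some s := hends.2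
      obtain ⟨m', e', h1, h2, h3, h4⟩ := ih hlred
        (⟨t, c⁻¹⟩ :: ((⟨s, b⟩ :: x₂ :: m₃) ++ [⟨t, c⟩])) t
        ⟨fun z hz => by
          rcases List.mem_cons.mp hz with rfl | hz
          · exact fun hmem => hcr (by simpa using (φ t).range.inv_mem hmem)
          rcases List.mem_append.mp hz with hz | hz
          · exact hm.1 z hz
          rcases List.mem_singleton.mp hz with rfl
          · exact hcr,
         List.isChain_cons.mpr ⟨fun y hy => by
            obtain rfl : (⟨s, b⟩ : Σ i, G i) = y := by simpa using hy
            exact hte,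
          List.isChain_append.mpr ⟨hm.2, List.isChain_singleton _, by
            intro z hz y hy
            obtain rfl : (⟨t, c⟩ : Σ i, G i) = y := by simpa using hy
            have hz1 : z.1 = s := by
              have := congrArg (Option.map Sigma.fst) (Option.mem_def.mp hz)
              rw [hlast] at this
              simpa using this.symm
            rw [hz1]; exact fun h => hte h.symm⟩⟩⟩
        ⟨rfl, by
          rw [show (⟨t, c⁻¹⟩ :: ((⟨s, b⟩ :: x₂ :: m₃) ++ [⟨t, c⟩]) : List (Σ i, G i))
            = (⟨t, c⁻¹⟩ :: ⟨s, b⟩ :: x₂ :: m₃) ++ [⟨t, c⟩] from rfl, List.getLast?_concat]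
          rfl⟩
        (fun u hu _ => (hhead u hu).symm)
      refine ⟨m', e', h1, h2, ?_, fun hlen => absurd (h4 hlen).1 (by simp)⟩
      rw [h3]
      simp only [prodL_cons, prodL_append, prodL_nil, map_inv]
      group

/-- the reversed, inverted list -/
def linv (l : List (Σ i, G i)) : List (Σ i, G i) :=
  (l.map fun x => ⟨x.1, x.2⁻¹⟩).reverse

theorem prodL_linv (l : List (Σ i, G i)) : prodL φ (linv l) = (prodL φ l)⁻¹ := by
  induction l with
  | nil => simp [linv]
  | cons x l ihl =>
    rw [prodL_cons, linv, List.map_cons, List.reverse_cons, prodL_append, ← linv, ihl]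
    simp [mul_inv_rev]

theorem red_linv {l : List (Σ i, G i)} (hl : Red φ l) : Red φ (linv l) := by
  constructor
  · intro x hx
    rw [linv, List.mem_reverse, List.mem_map] at hx
    obtain ⟨y, hy, rfl⟩ := hx
    exact fun hmem => hl.1 y hy (by simpa using (φ y.1).range.inv_mem hmem)
  · rw [linv]; change List.IsChain _ _; rw [List.isChain_reverse, List.isChain_map]
    exact List.IsChain.imp (fun a b hab hh => hab hh.symm) hl.2

theorem mem_linv {l : List (Σ i, G i)} {x : Σ i, G i} (hx : x ∈ l) :
    (⟨x.1, x.2⁻¹⟩ : Σ i, G i) ∈ linv l := by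
  rw [linv, List.mem_reverse, List.mem_map]
  exact ⟨x, hx, rfl⟩

theorem prodL_mem_range {l : List (Σ i, G i)} {i : ι} (h : ∀ x ∈ l, x.1 = i) :
    prodL φ l ∈ (of i).range := by
  induction l with
  | nil => exact ⟨1, map_one _⟩
  | cons x l ihl =>
    rw [prodL_cons]
    obtain ⟨xi, xg⟩ := x
    obtain rfl : xi = i := h _ (List.mem_cons_self)
    exact mul_mem ⟨xg, rfl⟩ (ihl fun z hz => h z (List.mem_cons_of_mem _ hz))

theorem exists_red_decomp (hφ : ∀ i, Injective (φ i)) (g : PushoutI φ) :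
    ∃ (h : H) (l : List (Σ i, G i)), Red φ l ∧ g = base φ h * prodL φ l := by
  classical
  obtain ⟨d⟩ := NormalWord.transversal_nonempty φ hφ
  set w := NormalWord.equiv (d := d) g with hw
  refine ⟨w.head, w.toList, ⟨?_, w.chain_ne⟩, ?_⟩
  · rintro ⟨i, gl⟩ hmem hrange
    have h1 : gl ∈ d.set i := w.normalized i gl hmem
    have h2 : gl ≠ 1 := w.ne_one ⟨i, gl⟩ hmem
    have h3 : (((d.compl i).equiv gl).2 : G i) = gl :=
      ((d.compl i).equiv_snd_eq_self_iff_mem (one_mem _)).mpr h1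
    have h4 : (((d.compl i).equiv gl).2 : G i) = 1 :=
      ((d.compl i).coe_equiv_snd_eq_one_iff_mem (d.one_mem i)).mpr hrange
    exact h2 (h3.symm.trans h4)
  · have h5 : w.prod = g := by
      rw [hw]
      exact (NormalWord.equiv (d := d)).symm_apply_apply g
    rw [← h5, NormalWord.prod]
    congr 1
    simp [CoprodI.Word.prod, prodL, map_list_prod, List.map_map, Function.comp_def]


theorem conj_mem_of_range (hφ : ∀ i, Injective (φ i))
    (hc : ∀ i (h : H) (g : G i), φ i h * g = g * φ i h)
    {i : ι} {a : G i} (ha : a ∉ (φ i).range) {g : PushoutI φ}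
    (hconj : g * of i a * g⁻¹ ∈ (of i).range) : g ∈ (of i).range := by
  obtain ⟨h, l, hl, rfl⟩ := exists_red_decomp hφ g
  have hbase : base φ h ∈ (of i).range := ⟨φ i h, of_apply_eq_base φ i h⟩
  have hP : prodL φ l * of i a * (prodL φ l)⁻¹ ∈ (of i).range := by
    have heq : prodL φ l * of i a * (prodL φ l)⁻¹ =
        (base φ h)⁻¹ * (base φ h * prodL φ l * of i a * (base φ h * prodL φ l)⁻¹) *
          base φ h := by
      group
    rw [heq]
    exact mul_mem (mul_mem (inv_mem hbase) hconj) hbase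
  obtain ⟨m', e', h1, h2, h3, h4⟩ := conj_core hφ hc (linv l) (red_linv hl) [⟨i, a⟩] i
    ⟨fun z hz => by rcases List.mem_singleton.mp hz with rfl; exact ha,
      List.isChain_singleton _⟩
    (by simp [Ends]) (fun u hu h1 => by simp at h1)
  have h5 : prodL φ m' = prodL φ l * of i a * (prodL φ l)⁻¹ := by
    rw [h3, prodL_linv, prodL_cons, prodL_nil, inv_inv, mul_one]
  have hlen : m'.length = 1 := by
    rcases Nat.lt_or_ge m'.length 2 with hlt | hge
    · have hne : m' ≠ [] := by
        rintro rfl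
        simp [Ends] at h2
      have := List.length_pos_iff.mpr hne
      omega
    · exact absurd (h5 ▸ hP) (red_not_of hφ h1 hge i)
  obtain ⟨-, -, hall⟩ := h4 hlen
  have hlmem : prodL φ l ∈ (of i).range := by
    refine prodL_mem_range fun x hx => ?_
    exact hall ⟨x.1, x.2⁻¹⟩ (mem_linv hx)
  exact mul_mem hbase hlmem

section Transfer

variable {G : Type u} [Group G]

/-- the two-element family of subgroups -/
def fam (A C : Subgroup G) : Bool → Subgroup G := fun b => bif b then A else C

theorem conj_step {A C B D : Subgroup G} (hyp : IsCentralAmalgamIn A C B D)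
    {x g : G} (hx : x ∈ A) (hxB : x ∉ B) (hg : g ∈ D) (hconj : g * x * g⁻¹ ∈ A) :
    g ∈ A := by
  have hle : ∀ b, B ≤ fam A C b := fun b => by
    cases b
    · exact hyp.B_le_C
    · exact hyp.B_le_A
  set φ : ∀ b : Bool, ↥B →* ↥(fam A C b) := fun b => Subgroup.inclusion (hle b) with hφdef
  have hφ : ∀ b, Injective (φ b) := fun b => Subgroup.inclusion_injective _
  have hc : ∀ b (h : ↥B) (z : ↥(fam A C b)), φ b h * z = z * φ b h := by
    intro b h z
    cases b
    · exact Subtype.ext (hyp.central_C h h.2 z z.2)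
    · exact Subtype.ext (hyp.central_A h h.2 z z.2)
  -- the two canonical maps
  have hcompat : ∀ (b : G) (hb : b ∈ B),
      (of (φ := φ) true) ⟨b, hyp.B_le_A hb⟩ = (of (φ := φ) false) ⟨b, hyp.B_le_C hb⟩ := by
    intro b hb
    have h1 : (⟨b, hyp.B_le_A hb⟩ : ↥A) = φ true ⟨b, hb⟩ := rfl
    have h2 : (⟨b, hyp.B_le_C hb⟩ : ↥C) = φ false ⟨b, hb⟩ := rfl
    exact (of_apply_eq_base φ true ⟨b, hb⟩).trans (of_apply_eq_base φ false ⟨b, hb⟩).symm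
  obtain ⟨Φ, ⟨hΦA, hΦC⟩, hΦuniq⟩ :=
    hyp.isPushout (PushoutI φ) (of (φ := φ) true) (of (φ := φ) false) hcompat
  have hdle : ∀ b, fam A C b ≤ D := fun b => by
    cases b
    · exact hyp.C_le
    · exact hyp.A_le
  set Ψ : PushoutI φ →* ↥D :=
    PushoutI.lift (fun b => Subgroup.inclusion (hdle b))
      (Subgroup.inclusion (hyp.B_le_A.trans hyp.A_le))
      (fun b => MonoidHom.ext fun z => rfl) with hΨdef
  -- Ψ ∘ Φ = id
  have hinc : ∀ (b : G) (hb : b ∈ B),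
      Subgroup.inclusion hyp.A_le ⟨b, hyp.B_le_A hb⟩ =
        Subgroup.inclusion hyp.C_le ⟨b, hyp.B_le_C hb⟩ := fun b hb => rfl
  obtain ⟨θ, hθ, hθuniq⟩ :=
    hyp.isPushout ↥D (Subgroup.inclusion hyp.A_le) (Subgroup.inclusion hyp.C_le) hinc
  have hΨΦ : Ψ.comp Φ = MonoidHom.id ↥D := by
    have e1 : Ψ.comp Φ = θ := by
      apply hθuniq
      constructor
      · rw [MonoidHom.comp_assoc, hΦA]
        exact MonoidHom.ext fun z => by
          show Ψ (of true z) = _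
          exact PushoutI.lift_of _ _ _ _
      · rw [MonoidHom.comp_assoc, hΦC]
        exact MonoidHom.ext fun z => by
          show Ψ (of false z) = _
          exact PushoutI.lift_of _ _ _ _
    have e2 : MonoidHom.id ↥D = θ := by
      apply hθuniq
      exact ⟨MonoidHom.id_comp _, MonoidHom.id_comp _⟩
    rw [e1, e2]
  have hΦinj : Injective Φ := by
    intro z₁ z₂ hz
    have := congrArg Ψ hz
    rwa [show ∀ w, Ψ (Φ w) = w from fun w => by
      rw [← MonoidHom.comp_apply, hΨΦ]; rfl,
      show Ψ (Φ z₂) = z₂ from by rw [← MonoidHom.comp_apply, hΨΦ]; rfl] at this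
  -- now apply the pushout conjugation lemma
  have ha : (⟨x, hx⟩ : ↥A) ∉ (φ true).range := by
    rintro ⟨bb, hbb⟩
    exact hxB (by
      have := congrArg Subtype.val hbb
      simp only [hφdef] at this
      rw [← show ((bb : G)) = x from this]
      exact bb.2)
  have hofA : ∀ (z : ↥A), Φ (Subgroup.inclusion hyp.A_le z) = of (φ := φ) true z :=
    fun z => DFunLike.congr_fun hΦA z
  have hgx : Φ ⟨g, hg⟩ * of (φ := φ) true ⟨x, hx⟩ * (Φ ⟨g, hg⟩)⁻¹ ∈
      (of (φ := φ) true).range := by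
    have hdecomp : (⟨g, hg⟩ : ↥D) * Subgroup.inclusion hyp.A_le ⟨x, hx⟩ * (⟨g, hg⟩ : ↥D)⁻¹
        = Subgroup.inclusion hyp.A_le ⟨g * x * g⁻¹, hconj⟩ := rfl
    refine ⟨⟨g * x * g⁻¹, hconj⟩, ?_⟩
    calc of (φ := φ) true ⟨g * x * g⁻¹, hconj⟩
        = Φ (Subgroup.inclusion hyp.A_le ⟨g * x * g⁻¹, hconj⟩) := (hofA _).symm
      _ = Φ ((⟨g, hg⟩ : ↥D) * Subgroup.inclusion hyp.A_le ⟨x, hx⟩ * (⟨g, hg⟩ : ↥D)⁻¹) := by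
          rw [hdecomp]
      _ = Φ ⟨g, hg⟩ * Φ (Subgroup.inclusion hyp.A_le ⟨x, hx⟩) * (Φ ⟨g, hg⟩)⁻¹ := by
          simp only [map_mul, map_inv]
      _ = Φ ⟨g, hg⟩ * of (φ := φ) true ⟨x, hx⟩ * (Φ ⟨g, hg⟩)⁻¹ :=
          congrArg (fun t => Φ ⟨g, hg⟩ * t * (Φ ⟨g, hg⟩)⁻¹) (hofA ⟨x, hx⟩)
  have := AmalgAux.conj_mem_of_range hφ hc ha hgx
  obtain ⟨a', ha'⟩ := this
  have : Subgroup.inclusion hyp.A_le a' = ⟨g, hg⟩ := hΦinj ((hofA a').trans ha')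
  have hgval : (a' : G) = g := congrArg Subtype.val this
  rw [← hgval]
  exact a'.2

end Transfer

section Iterated

variable {G : Type u} [Group G]

theorem G_mono (S : IteratedAmalgam G) : Monotone S.Gn :=
  monotone_nat_of_le_succ fun n => (S.amalgam n).A_le

theorem B_anti (S : IteratedAmalgam G) : Antitone S.Bn :=
  antitone_nat_of_succ_le S.B_antitone

theorem climb (S : IteratedAmalgam G) {m : ℕ} {x : G} (hx : x ∈ S.Gn m)
    (hxB : x ∉ S.Bn m) :
    ∀ M, ∀ g ∈ S.Gn M, g * x * g⁻¹ ∈ S.Gn m → g ∈ S.Gn m := by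
  intro M
  induction M with
  | zero => exact fun g hg _ => G_mono S (Nat.zero_le m) hg
  | succ M ih =>
    intro g hg hconj
    rcases le_or_gt (M + 1) m with hMm | hMm
    · exact G_mono S hMm hg
    · have hmM : m ≤ M := by omega
      have hstep : g ∈ S.Gn M :=
        conj_step (S.amalgam M) (G_mono S hmM hx)
          (fun hmem => hxB (B_anti S hmM hmem)) hg (G_mono S hmM hconj)
      exact ih g hstep hconj

end Iterated

end AmalgAux

/-- If `H ≤ G` is spread out and `N` is a non-trivial normal subgroup of `H`, then for
every `k` there are `h ∈ N` and `g ∈ H` whose commutator `g * h * g⁻¹ * h⁻¹` lies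
outside `G_k`. -/
theorem exists_commutator_not_mem_of_normal_of_spreadOut {G : Type u} [Group G]
    (S : IteratedAmalgam G) (H : Subgroup G) (hH : S.SpreadOut H)
    (N : Subgroup G) (hNH : N ≤ H)
    (hNnormal : ∀ g ∈ H, ∀ x ∈ N, g * x * g⁻¹ ∈ N)
    (hNbot : N ≠ ⊥) :
    ∀ k : ℕ, ∃ h ∈ N, ∃ g ∈ H, g * h * g⁻¹ * h⁻¹ ∉ S.Gn k := by
  intro k
  obtain ⟨x, hxN, hx1⟩ : ∃ x ∈ N, x ≠ 1 := by
    rcases Subgroup.ne_bot_iff_exists_ne_one.mp hNbot with ⟨⟨x, hx⟩, hx1⟩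
    exact ⟨x, hx, by simpa using hx1⟩
  have hdir : Directed (· ≤ ·) S.Gn := (AmalgAux.G_mono S).directed_le
  obtain ⟨j, hj⟩ : ∃ j, x ∈ S.Gn j := by
    have : x ∈ ⨆ n, S.Gn n := S.iSup_G.symm ▸ Subgroup.mem_top x
    exact (Subgroup.mem_iSup_of_directed hdir).mp this
  obtain ⟨n0, hn0⟩ : ∃ n, x ∉ S.Bn n := by
    by_contra hcon
    push_neg at hcon
    have : x ∈ ⨅ n, S.Bn n := Subgroup.mem_iInf.mpr hcon
    rw [S.B_iInf] at this
    exact hx1 (Subgroup.mem_bot.mp this)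
  set m := max k (max j n0) with hm
  have hxGm : x ∈ S.Gn m := AmalgAux.G_mono S (le_trans (le_max_left j n0) (le_max_right _ _)) hj
  have hxBm : x ∉ S.Bn m :=
    fun hmem => hn0 (AmalgAux.B_anti S (le_trans (le_max_right j n0) (le_max_right _ _)) hmem)
  obtain ⟨g, hgH, hgm⟩ : ∃ g ∈ H, g ∉ S.Gn m := by
    have := hH m
    rwa [SetLike.not_le_iff_exists] at this
  refine ⟨x, hxN, g, hgH, fun hcomm => ?_⟩
  have hconj : g * x * g⁻¹ ∈ S.Gn m := by
    have h1 : g * x * g⁻¹ * x⁻¹ * x ∈ S.Gn m :=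
      mul_mem (AmalgAux.G_mono S (le_max_left _ _) hcomm) hxGm
    simpa [mul_assoc] using h1
  obtain ⟨M, hM⟩ : ∃ M, g ∈ S.Gn M := by
    have : g ∈ ⨆ n, S.Gn n := S.iSup_G.symm ▸ Subgroup.mem_top g
    exact (Subgroup.mem_iSup_of_directed hdir).mp this
  exact hgm (AmalgAux.climb S hxGm hxBm M g hM hconj)
end

section
/- In the setting of the iterated central amalgamation: if a subgroup H of G is spread out, then every non-trivial subnormal subgroup S of H is spread out. In particular, every non-trivial subnormal subgroup S of G is spread out. -/
universe u

/-- `S` is a subnormal subgroup of `H`: there is a finite chain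
`S = c 0 ⊴ c 1 ⊴ ⋯ ⊴ c m = H` of successive normal subgroups. -/
def Subnormal {G : Type u} [Group G] (S H : Subgroup G) : Prop :=
  ∃ (m : ℕ) (c : ℕ → Subgroup G), c 0 = S ∧ c m = H ∧
    ∀ i < m, c i ≤ c (i + 1) ∧ ∀ g ∈ c (i + 1), ∀ x ∈ c i, g * x * g⁻¹ ∈ c i



namespace MyFP

open Monoid.CoprodI

theorem word_conj {ι : Type*} {M : ι → Type*} [∀ i, Group (M i)]
    (i : ι) (x : M i) (hx : x ≠ 1) (w : Word M) :
    ∃ (j : ι) (v : NeWord M j j),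
      v.prod = w.prod * Monoid.CoprodI.of x * w.prod⁻¹ ∧
      ((w.toList = [] ∧ j = i) ∨ w.fstIdx = some j) ∧
      2 * w.toList.length ≤ v.toList.length + 1 := by
  classical
  induction w using Word.consRecOn with
  | empty => exact ⟨i, .singleton x hx, by simp, Or.inl ⟨rfl, rfl⟩, by simp⟩
  | cons i₀ m w' hmw h1 ih =>
    obtain ⟨j, v, hvp, hj, hlen⟩ := ih
    by_cases hij : i₀ = j
    · subst hij
      rcases hj with ⟨hw'nil, rfl⟩ | hfst
      · have hw' : w' = Word.empty := Word.ext hw'nil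
        have hmx : m * x * m⁻¹ ≠ 1 := fun h => hx (by
          have h2 : x = m⁻¹ * (m * x * m⁻¹) * m := by group
          rw [h] at h2; simpa using h2)
        refine ⟨_, .singleton (m * x * m⁻¹) hmx, ?_, Or.inr (Word.fstIdx_cons _ _ _ _), ?_⟩
        · rw [NeWord.prod_singleton, Word.prod_cons, hw', Word.prod_empty, mul_one,
            map_mul, map_mul, map_inv]
        · rw [Word.cons_toList, hw'nil]
          rfl
      · exact absurd hfst hmw
    · refine ⟨i₀, .append (.append (.singleton m h1) hij v) (Ne.symm hij)
        (.singleton m⁻¹ (inv_ne_one.2 h1)), ?_, Or.inr (Word.fstIdx_cons _ _ _ _), ?_⟩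
      · rw [NeWord.append_prod, NeWord.append_prod, NeWord.prod_singleton,
          NeWord.prod_singleton, hvp, Word.prod_cons, map_inv]
        group
      · have hL : (Word.cons m w' hmw h1).toList.length = w'.toList.length + 1 := by
          rw [Word.cons_toList]; rfl
        simp only [NeWord.toList, List.length_append, List.length_cons, List.length_nil, hL]
        omega

theorem prod_injective {ι : Type*} {M : ι → Type*} [∀ i, Group (M i)] :
    Function.Injective (Word.prod : Word M → Monoid.CoprodI M) := by
  classical
  intro a b h
  have := Word.equiv (M := M) |>.symm.injective (a₁ := a) (a₂ := b)
  exact this h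

/-- Conjugation lemma in a free product: if `x ≠ 1` lies in the factor `M i` and
`g * of x * g⁻¹` lies in the image of `M i`, then `g` lies in the image of `M i`. -/
theorem conj_mem_range {ι : Type*} {M : ι → Type*} [∀ i, Group (M i)]
    {i : ι} {x : M i} (hx : x ≠ 1) {g : Monoid.CoprodI M}
    (h : g * Monoid.CoprodI.of x * g⁻¹ ∈ (Monoid.CoprodI.of : M i →* _).range) :
    g ∈ (Monoid.CoprodI.of : M i →* _).range := by
  classical
  obtain ⟨y, hy⟩ := h
  set w := Word.equiv g with hwdef
  have hgw : w.prod = g := Word.equiv.symm_apply_apply g ▸ rfl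
  obtain ⟨j, v, hvp, hj, hlen⟩ := word_conj i x hx w
  rw [hgw, ← hy] at hvp
  have hy1 : y ≠ 1 := by
    rintro rfl
    rw [map_one] at hvp
    have : v.toWord = Word.empty := prod_injective (by rw [← NeWord.prod]; exact hvp)
    exact v.toList_ne_nil (congrArg Word.toList this)
  have hsing : v.toWord = (NeWord.singleton y hy1).toWord :=
    prod_injective (by rw [← NeWord.prod, ← NeWord.prod, hvp, NeWord.prod_singleton])
  have hlist : v.toList = [⟨i, y⟩] := by
    have := congrArg Word.toList hsing
    simpa [NeWord.toWord] using this
  have hji : j = i := by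
    have h1 := v.toList_head?
    rw [hlist] at h1
    exact (Sigma.mk.inj_iff.1 (Option.some.inj h1)).1.symm
  have hv1 : v.toList.length = 1 := by rw [hlist]; rfl
  have hlen1 : w.toList.length ≤ 1 := by omega
  match hL : w.toList, hlen1 with
  | [], _ =>
    have hw : w = Word.empty := Word.ext hL
    exact ⟨1, by rw [map_one, ← hgw, hw, Word.prod_empty]⟩
  | [⟨zi, zm⟩], _ =>
    have hfst : w.fstIdx = some i := by
      rcases hj with ⟨hnil, _⟩ | h
      · rw [hL] at hnil; cases hnil
      · exact hji ▸ h
    have hzi : zi = i := by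
      rw [Word.fstIdx, hL] at hfst
      exact Option.some.inj hfst
    subst hzi
    refine ⟨zm, ?_⟩
    rw [← hgw]
    show Monoid.CoprodI.of zm = _
    rw [Word.prod, hL]
    simp

end MyFP
namespace MyAmalgam

open Monoid

variable {G : Type u} [Group G]

/-- The two factors, as a `Bool`-indexed family of subgroups. -/
abbrev J (A C : Subgroup G) : Bool → Subgroup G := fun b => cond b A C

variable {A C B : Subgroup G}

/-- The two inclusions of the base. -/
def fmap (hB : ∀ b, B ≤ J A C b) : ∀ b, ↥B →* ↥(J A C b) :=
  fun b => Subgroup.inclusion (hB b)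

theorem fmap_injective (hB : ∀ b, B ≤ J A C b) (b : Bool) :
    Function.Injective (fmap hB b) :=
  Subgroup.inclusion_injective (hB b)

variable (hB : ∀ b, B ≤ J A C b)

/-- The map from the abstract pushout back to `G`. -/
def piK : PushoutI (fmap hB) →* G :=
  PushoutI.lift (fun b => (J A C b).subtype) B.subtype (by intro b; ext x; rfl)

@[simp] theorem piK_of (b : Bool) (g : ↥(J A C b)) :
    piK hB (PushoutI.of (φ := fmap hB) b g) = ↑g := by
  rw [piK, PushoutI.lift_of]; rfl

@[simp] theorem piK_base (x : ↥B) :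
    piK hB (PushoutI.base (fmap hB) x) = ↑x := by
  rw [piK, PushoutI.lift_base]; rfl

theorem base_range_le_of (b : Bool) :
    (PushoutI.base (fmap hB)).range ≤ (PushoutI.of (φ := fmap hB) b).range := by
  rintro x ⟨y, rfl⟩
  exact ⟨fmap hB b y, PushoutI.of_apply_eq_base _ b y⟩

section Central

variable (hc : ∀ (b : Bool), ∀ x ∈ B, ∀ y ∈ J A C b, x * y = y * x)
include hc

theorem subgroupOf_normal (b : Bool) : (B.subgroupOf (J A C b)).Normal := by
  constructor
  intro n hn g
  rw [Subgroup.mem_subgroupOf] at hn ⊢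
  have : ((g * n * g⁻¹ : ↥(J A C b)) : G) = (n : G) := by
    push_cast
    rw [← hc b (↑n) hn (↑g) g.2]
    group
  rw [this]
  exact hn

theorem base_comm (x : ↥B) (k : PushoutI (fmap hB)) :
    k * PushoutI.base (fmap hB) x = PushoutI.base (fmap hB) x * k := by
  induction k using PushoutI.induction_on with
  | of i g =>
    rw [← PushoutI.of_apply_eq_base (fmap hB) i x, ← map_mul, ← map_mul]
    refine congrArg _ (Subtype.ext ?_)
    push_cast [fmap, Subgroup.coe_inclusion]
    exact (hc i (↑x) x.2 (↑g) g.2).symm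
  | base h =>
    rw [← map_mul, ← map_mul]
    refine congrArg _ (Subtype.ext ?_)
    push_cast
    exact (hc true (↑x) x.2 (↑h) (hB true h.2)).symm
  | mul y z ihy ihz =>
    rw [mul_assoc, ihz, ← mul_assoc, ihy, mul_assoc]

theorem base_range_normal : (PushoutI.base (fmap hB)).range.Normal := by
  constructor
  rintro n ⟨x, rfl⟩ g
  rw [base_comm hB hc x g, mul_assoc, mul_inv_cancel, mul_one]
  exact ⟨x, rfl⟩

end Central

section Theta

variable [hN : ∀ b, (B.subgroupOf (J A C b)).Normal]

/-- The projection from the pushout to the free product of the quotients of the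
factors by the base. -/
def theta : PushoutI (fmap hB) →*
    Monoid.CoprodI (fun b => ↥(J A C b) ⧸ B.subgroupOf (J A C b)) :=
  PushoutI.lift
    (fun b => (Monoid.CoprodI.of (M := fun b => ↥(J A C b) ⧸ B.subgroupOf (J A C b))).comp
      (QuotientGroup.mk' (B.subgroupOf (J A C b)))) 1
    (by
      intro b
      ext x
      simp only [MonoidHom.comp_apply, MonoidHom.one_apply, QuotientGroup.mk'_apply]
      have hx1 : ((fmap hB b x : ↥(J A C b)) : ↥(J A C b) ⧸ B.subgroupOf (J A C b)) = 1 :=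
        (QuotientGroup.eq_one_iff _).2 (by
          rw [Subgroup.mem_subgroupOf]
          exact x.2)
      rw [hx1, map_one])

@[simp] theorem theta_of (b : Bool) (g : ↥(J A C b)) :
    theta hB (PushoutI.of (φ := fmap hB) b g) =
      Monoid.CoprodI.of (M := fun b => ↥(J A C b) ⧸ B.subgroupOf (J A C b))
        (i := b) (QuotientGroup.mk g) := by
  rw [theta, PushoutI.lift_of]; rfl

theorem ker_theta_le (hc : ∀ (b : Bool), ∀ x ∈ B, ∀ y ∈ J A C b, x * y = y * x)
    (k : PushoutI (fmap hB)) (hk : theta hB k = 1) :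
    k ∈ (PushoutI.base (fmap hB)).range := by
  haveI hZ : (PushoutI.base (fmap hB)).range.Normal := base_range_normal hB hc
  set Z := (PushoutI.base (fmap hB)).range with hZdef
  have hcond : ∀ b : Bool, B.subgroupOf (J A C b) ≤
      (((QuotientGroup.mk' Z).comp (PushoutI.of (φ := fmap hB) b))).ker := by
    intro b x hx
    rw [MonoidHom.mem_ker, MonoidHom.comp_apply, QuotientGroup.mk'_apply,
      QuotientGroup.eq_one_iff]
    rw [Subgroup.mem_subgroupOf] at hx
    have hxe : x = fmap hB b ⟨↑x, hx⟩ := Subtype.ext rfl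
    rw [hxe, PushoutI.of_apply_eq_base]
    exact ⟨_, rfl⟩
  set ρ : Monoid.CoprodI (fun b => ↥(J A C b) ⧸ B.subgroupOf (J A C b)) →*
      PushoutI (fmap hB) ⧸ Z :=
    Monoid.CoprodI.lift (fun b => QuotientGroup.lift (B.subgroupOf (J A C b))
      ((QuotientGroup.mk' Z).comp (PushoutI.of (φ := fmap hB) b)) (hcond b)) with hρdef
  have hρθ : ∀ k : PushoutI (fmap hB), ρ (theta hB k) = QuotientGroup.mk' Z k := by
    have : ρ.comp (theta hB) = QuotientGroup.mk' Z := by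
      apply PushoutI.hom_ext_nonempty
      intro b
      ext g
      simp only [MonoidHom.comp_apply, theta_of, Monoid.CoprodI.lift_of, hρdef]
      rfl
    intro k
    rw [← this]
    rfl
  have := hρθ k
  rw [hk, map_one] at this
  exact (QuotientGroup.eq_one_iff k).1 this.symm

end Theta


end MyAmalgam

section Key

open Monoid MyAmalgam

variable {G : Type u} [Group G] {A C B D : Subgroup G}

theorem IsCentralAmalgamIn.key (h : IsCentralAmalgamIn A C B D) :
    (∀ g ∈ D, g ∉ A → ∀ a ∈ A, g * a * g⁻¹ ∈ A → a ∈ B) ∧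
    (∀ c ∈ C, c ∈ A → c ∈ B) := by
  classical
  have hB : ∀ b, B ≤ J A C b := by
    intro b; cases b
    · exact h.B_le_C
    · exact h.B_le_A
  have hc : ∀ (b : Bool), ∀ x ∈ B, ∀ y ∈ J A C b, x * y = y * x := by
    intro b; cases b
    · exact h.central_C
    · exact h.central_A
  haveI hN : ∀ b, (B.subgroupOf (J A C b)).Normal := fun b => subgroupOf_normal hc b
  -- the universal map from `D` to the pushout
  obtain ⟨σ, ⟨hσA, hσC⟩, -⟩ := h.isPushout (PushoutI (fmap hB))
    (PushoutI.of (φ := fmap hB) true) (PushoutI.of (φ := fmap hB) false)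
    (by
      intro b hb
      exact (PushoutI.of_apply_eq_base (fmap hB) true ⟨b, hb⟩).trans
        (PushoutI.of_apply_eq_base (fmap hB) false ⟨b, hb⟩).symm)
  -- `piK ∘ σ` is the inclusion of `D` in `G`
  have hπσ : ∀ d : ↥D, piK hB (σ d) = ↑d := by
    obtain ⟨ψ, -, hψu⟩ := h.isPushout G A.subtype C.subtype (fun b hb => rfl)
    have e1 : (piK hB).comp σ = ψ := by
      apply hψu
      constructor
      · rw [MonoidHom.comp_assoc, hσA]
        ext a
        exact piK_of hB true a
      · rw [MonoidHom.comp_assoc, hσC]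
        ext c
        exact piK_of hB false c
    have e2 : D.subtype = ψ := by
      apply hψu
      constructor <;> (ext x; rfl)
    intro d
    rw [show piK hB (σ d) = ((piK hB).comp σ) d from rfl, e1, ← e2]
    rfl
  -- transfer lemmas
  have tA : ∀ d : ↥D, σ d ∈ (PushoutI.of (φ := fmap hB) true).range → (d : G) ∈ A := by
    rintro d ⟨a, ha⟩
    have := hπσ d
    rw [← ha, piK_of] at this
    rw [← this]
    exact a.2
  have tB : ∀ d : ↥D, σ d ∈ (PushoutI.base (fmap hB)).range → (d : G) ∈ B := by
    rintro d ⟨x, hx⟩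
    have := hπσ d
    rw [← hx, piK_base] at this
    rw [← this]
    exact x.2
  have sA : ∀ (a : G) (haA : a ∈ A),
      σ ⟨a, h.A_le haA⟩ = PushoutI.of (φ := fmap hB) true ⟨a, haA⟩ := by
    intro a haA
    have e : σ (Subgroup.inclusion h.A_le ⟨a, haA⟩)
        = (σ.comp (Subgroup.inclusion h.A_le)) ⟨a, haA⟩ := rfl
    rw [hσA] at e
    exact e
  have sC : ∀ (c : G) (hcC : c ∈ C),
      σ ⟨c, h.C_le hcC⟩ = PushoutI.of (φ := fmap hB) false ⟨c, hcC⟩ := by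
    intro c hcC
    have e : σ (Subgroup.inclusion h.C_le ⟨c, hcC⟩)
        = (σ.comp (Subgroup.inclusion h.C_le)) ⟨c, hcC⟩ := rfl
    rw [hσC] at e
    exact e
  constructor
  · -- main conjugation statement
    intro g hgD hgA a haA hconj
    by_contra haB
    -- inside `↥D`
    have hDeq : (⟨g, hgD⟩ : ↥D) * ⟨a, h.A_le haA⟩ * (⟨g, hgD⟩ : ↥D)⁻¹
        = ⟨g * a * g⁻¹, h.A_le hconj⟩ := Subtype.ext rfl
    have hKeq : σ ⟨g, hgD⟩ * PushoutI.of (φ := fmap hB) true ⟨a, haA⟩ * (σ ⟨g, hgD⟩)⁻¹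
        = PushoutI.of (φ := fmap hB) true ⟨g * a * g⁻¹, hconj⟩ := by
      rw [← sA a haA, ← sA (g * a * g⁻¹) hconj, ← map_inv, ← map_mul, ← map_mul, hDeq]
    -- apply theta
    set θ := theta hB with hθdef
    have hLeq : θ (σ ⟨g, hgD⟩) * Monoid.CoprodI.of (i := true) (QuotientGroup.mk
          (⟨a, haA⟩ : ↥(J A C true)) : ↥(J A C true) ⧸ B.subgroupOf (J A C true))
          * (θ (σ ⟨g, hgD⟩))⁻¹
        = Monoid.CoprodI.of (i := true) (QuotientGroup.mk
          (⟨g * a * g⁻¹, hconj⟩ : ↥(J A C true)) :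
            ↥(J A C true) ⧸ B.subgroupOf (J A C true)) := by
      rw [← theta_of hB true, ← theta_of hB true, ← map_inv, ← map_mul, ← map_mul, hKeq]
    have hane : (QuotientGroup.mk (⟨a, haA⟩ : ↥(J A C true)) :
        ↥(J A C true) ⧸ B.subgroupOf (J A C true)) ≠ 1 := by
      rw [Ne, QuotientGroup.eq_one_iff, Subgroup.mem_subgroupOf]
      exact haB
    have hmem := MyFP.conj_mem_range hane (g := θ (σ ⟨g, hgD⟩)) ⟨_, hLeq.symm⟩
    obtain ⟨q, hq⟩ := hmem
    obtain ⟨a₀, rfl⟩ := QuotientGroup.mk_surjective q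
    have hker : θ (σ ⟨g, hgD⟩ * (PushoutI.of (φ := fmap hB) true a₀)⁻¹) = 1 := by
      rw [map_mul, map_inv, hθdef, theta_of hB true, ← hq]
      exact mul_inv_cancel _
    have hbase := ker_theta_le hB hc _ hker
    have : σ ⟨g, hgD⟩ ∈ (PushoutI.of (φ := fmap hB) true).range := by
      have h1 : σ ⟨g, hgD⟩ * (PushoutI.of (φ := fmap hB) true a₀)⁻¹
          ∈ (PushoutI.of (φ := fmap hB) true).range := base_range_le_of hB true hbase
      have h2 := mul_mem h1 (MonoidHom.mem_range.2 ⟨a₀, rfl⟩ :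
        PushoutI.of (φ := fmap hB) true a₀ ∈ _)
      simpa using h2
    exact hgA (tA _ this)
  · -- intersection statement
    intro c hcC hcA
    apply tB ⟨c, h.C_le hcC⟩
    have h1 : σ ⟨c, h.C_le hcC⟩ ∈ (PushoutI.of (φ := fmap hB) true).range := by
      have : (⟨c, h.C_le hcC⟩ : ↥D) = ⟨c, h.A_le hcA⟩ := rfl
      rw [this, sA c hcA]
      exact ⟨_, rfl⟩
    have h2 : σ ⟨c, h.C_le hcC⟩ ∈ (PushoutI.of (φ := fmap hB) false).range := by
      rw [sC c hcC]
      exact ⟨_, rfl⟩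
    have h3 := Subgroup.mem_inf.2 ⟨h1, h2⟩
    rwa [PushoutI.inf_of_range_eq_base_range (fmap_injective hB)
      (by simp : (true : Bool) ≠ false)] at h3

end Key

section Glue

variable {G : Type u} [Group G] (S : IteratedAmalgam G)

theorem IteratedAmalgam.gmono : Monotone S.Gn :=
  monotone_nat_of_le_succ (fun n => (S.amalgam n).A_le)

theorem IteratedAmalgam.banti : Antitone S.Bn :=
  antitone_nat_of_succ_le S.B_antitone

theorem IteratedAmalgam.mem_some (g : G) : ∃ n, g ∈ S.Gn n := by
  have : g ∈ ⨆ n, S.Gn n := by rw [S.iSup_G]; trivial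
  rwa [Subgroup.mem_iSup_of_directed ((S.gmono).directed_le)] at this

theorem IteratedAmalgam.exists_step {g : G} : ∀ M m : ℕ, m ≤ M → g ∉ S.Gn m → g ∈ S.Gn M →
    ∃ k, m ≤ k ∧ g ∉ S.Gn k ∧ g ∈ S.Gn (k + 1) := by
  intro M
  induction M with
  | zero =>
    intro m hm hnot hin
    interval_cases m
    exact absurd hin hnot
  | succ M ih =>
    intro m hm hnot hin
    have hmM : m ≤ M := by
      rcases Nat.lt_succ_iff_lt_or_eq.1 (Nat.lt_succ_of_le hm) with h | h
      · omega
      · exact absurd (h ▸ hin) hnot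
    by_cases hM : g ∈ S.Gn M
    · exact ih m hmM hnot hM
    · exact ⟨M, hmM, hM, hin⟩

theorem IteratedAmalgam.spread_step {H N : Subgroup G} (hH : S.SpreadOut H) (hNH : N ≤ H)
    (hconj : ∀ g ∈ H, ∀ x ∈ N, g * x * g⁻¹ ∈ N) (hN : N ≠ ⊥) :
    S.SpreadOut N := by
  intro n hNle
  have key : ∀ m, N ≤ S.Bn m := by
    intro m
    have key' : N ≤ S.Bn (max m n) := by
      obtain ⟨h0, hh0H, hh0⟩ := SetLike.not_le_iff_exists.1 (hH (max m n))
      obtain ⟨M, hM⟩ := S.mem_some h0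
      have hMge : max m n ≤ M := by
        by_contra hlt
        exact hh0 (S.gmono (le_of_not_ge hlt) hM)
      obtain ⟨k, hk_ge, hk_notin, hk_in⟩ := S.exists_step M (max m n) hMge hh0 hM
      intro x hxN
      have hxA : x ∈ S.Gn k := S.gmono (le_trans (le_max_right m n) hk_ge) (hNle hxN)
      have hconjA : h0 * x * h0⁻¹ ∈ S.Gn k :=
        S.gmono (le_trans (le_max_right m n) hk_ge) (hNle (hconj h0 hh0H x hxN))
      exact S.banti hk_ge (((S.amalgam k).key).1 h0 hk_in hk_notin x hxA hconjA)
    exact key'.trans (S.banti (le_max_left m n))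
  have hbot : N ≤ ⊥ := by
    rw [← S.B_iInf]
    exact le_iInf key
  exact hN (le_bot_iff.1 hbot)

theorem IteratedAmalgam.top_spreadOut : S.SpreadOut (⊤ : Subgroup G) := by
  intro n htop
  have h1 : S.Hn (n + 1) ≤ S.Gn n := fun x _ => htop (by trivial)
  have h2 : S.Hn (n + 1) ≤ S.Bn n := fun x hx => ((S.amalgam n).key).2 x hx (h1 hx)
  exact S.B_ne_H_succ n (le_antisymm (S.B_le_H_succ n) h2)

end Glue




/-- If a subgroup `H` of `G` is spread out, then every non-trivial subnormal subgroup
of `H` is spread out; in particular, every non-trivial subnormal subgroup of `G` is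
spread out. -/
theorem spreadOut_of_subnormal_of_spreadOut {G : Type u} [Group G]
    (S : IteratedAmalgam G) :
    (∀ H : Subgroup G, S.SpreadOut H →
      ∀ T : Subgroup G, Subnormal T H → T ≠ ⊥ → S.SpreadOut T) ∧
    (∀ T : Subgroup G, Subnormal T ⊤ → T ≠ ⊥ → S.SpreadOut T)  := by
  have part1 : ∀ H : Subgroup G, S.SpreadOut H →
      ∀ T : Subgroup G, Subnormal T H → T ≠ ⊥ → S.SpreadOut T := by
    rintro H hH T ⟨m, c, hc0, hcm, hstep⟩ hT
    have hTle : ∀ i, i ≤ m → T ≤ c i := by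
      intro i
      induction i with
      | zero => intro _; exact hc0 ▸ le_refl T
      | succ i ih => intro hle; exact (ih (by omega)).trans (hstep i (by omega)).1
    have main : ∀ j, j ≤ m → S.SpreadOut (c (m - j)) := by
      intro j
      induction j with
      | zero =>
        intro _
        rw [Nat.sub_zero, hcm]
        exact hH
      | succ j ih =>
        intro hle
        have hi : m - j = (m - (j + 1)) + 1 := by omega
        have hlt : m - (j + 1) < m := by omega
        have hprev : S.SpreadOut (c ((m - (j + 1)) + 1)) := by
          rw [← hi]; exact ih (by omega)
        have hne : c (m - (j + 1)) ≠ ⊥ := by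
          intro hbot
          exact hT (le_bot_iff.1 (hbot ▸ hTle _ (by omega)))
        exact S.spread_step hprev (hstep _ hlt).1 (hstep _ hlt).2 hne
    have := main m (le_refl m)
    rw [Nat.sub_self, hc0] at this
    exact this
  exact ⟨part1, fun T hsub hT => part1 ⊤ S.top_spreadOut T hsub hT⟩
end

section
/- In the setting of the iterated central amalgamation: if a subgroup H of G is spread out, then its commutator subgroup H' is itself spread out. -/
universe u

set_option maxHeartbeats 1000000

namespace AmalgHelper

open Monoid Monoid.PushoutI Monoid.PushoutI.NormalWord Function List
open Monoid.CoprodI (Word)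

variable {Γ : Bool → Type u} [∀ i, Group (Γ i)] {B : Type u} [Group B]
  (φ : ∀ i, B →* Γ i)

def prodOf (l : List (Σ i, Γ i)) : PushoutI φ :=
  (l.map fun p => of p.1 p.2).prod

@[simp] lemma prodOf_nil : prodOf φ ([] : List (Σ i, Γ i)) = 1 := rfl

@[simp] lemma prodOf_append (l₁ l₂ : List (Σ i, Γ i)) :
    prodOf φ (l₁ ++ l₂) = prodOf φ l₁ * prodOf φ l₂ := by
  simp [prodOf]

@[simp] lemma prodOf_cons (p : (Σ i, Γ i)) (l : List (Σ i, Γ i)) :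
    prodOf φ (p :: l) = of p.1 p.2 * prodOf φ l := by
  simp [prodOf]

@[simp] lemma prodOf_singleton (p : (Σ i, Γ i)) :
    prodOf φ [p] = of p.1 p.2 := by
  simp [prodOf]

def invword (l : List (Σ i, Γ i)) : List (Σ i, Γ i) :=
  (l.map fun p => ⟨p.1, p.2⁻¹⟩).reverse

@[simp] lemma invword_nil : invword ([] : List (Σ i, Γ i)) = [] := rfl

lemma invword_concat (l : List (Σ i, Γ i)) (p : (Σ i, Γ i)) :
    invword (l ++ [p]) = ⟨p.1, p.2⁻¹⟩ :: invword l := by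
  simp [invword]

lemma invword_cons (p : (Σ i, Γ i)) (l : List (Σ i, Γ i)) :
    invword (p :: l) = invword l ++ [⟨p.1, p.2⁻¹⟩] := by
  simp [invword]

@[simp] lemma invword_length (l : List (Σ i, Γ i)) :
    (invword l).length = l.length := by
  simp [invword]

lemma prodOf_invword (l : List (Σ i, Γ i)) :
    prodOf φ (invword l) = (prodOf φ l)⁻¹ := by
  induction l with
  | nil => simp
  | cons p l ih =>
    rw [invword_cons, prodOf_append, ih, prodOf_cons]
    simp [mul_inv_rev]

lemma mem_invword {l : List (Σ i, Γ i)} {p : (Σ i, Γ i)} (hp : p ∈ invword l) :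
    ∃ q ∈ l, p = ⟨q.1, q.2⁻¹⟩ := by
  simp only [invword, mem_reverse, mem_map] at hp
  obtain ⟨q, hq, rfl⟩ := hp
  exact ⟨q, hq, rfl⟩

abbrev Rne : (Σ i, Γ i) → (Σ i, Γ i) → Prop := fun p q => p.1 ≠ q.1

lemma chain'_invword {l : List (Σ i, Γ i)} (h : l.Chain' Rne) :
    (invword (Γ := Γ) l).Chain' Rne := by
  rw [invword, List.Chain', List.isChain_reverse, List.isChain_map]
  exact List.IsChain.imp (fun a b hab => hab.symm) h

lemma mem_set_not_mem_range (d : Transversal φ) {i : Bool} {g : Γ i}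
    (hg : g ∈ d.set i) (hg1 : g ≠ 1) : g ∉ (φ i).range := by
  rintro ⟨b, rfl⟩
  apply hg1
  have h2 := (d.compl i).injective (a₁ := (⟨φ i b, ⟨b, rfl⟩⟩, ⟨1, d.one_mem i⟩))
    (a₂ := (⟨1, Subgroup.one_mem _⟩, ⟨φ i b, hg⟩)) (by simp)
  have := congrArg (fun p => (p.2 : Γ i)) h2
  simpa using this.symm

lemma ofCoprodI_wordProd (w : Word Γ) :
    ofCoprodI (w.prod) = prodOf φ w.toList := by
  rw [Word.prod, map_list_prod, List.map_map, prodOf]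
  congr 1

lemma K0 (hinj : ∀ i, Injective (φ i))
    (l₀ : List (Σ i, Γ i)) (hne : l₀ ≠ [])
    (hch : l₀.Chain' Rne)
    (hred : ∀ p ∈ l₀, p.2 ∉ (φ p.1).range)
    (hlast : (l₀.getLast hne).1 = false)
    (a : Γ true) (ha : a ∉ (φ true).range) :
    prodOf φ l₀ * of true a * (prodOf φ l₀)⁻¹ ∉ (of (φ := φ) true).range := by
  classical
  rintro ⟨a'', heq⟩
  obtain ⟨d⟩ := transversal_nonempty φ hinj
  set L : List (Σ i, Γ i) := l₀ ++ ⟨true, a⟩ :: invword l₀ with hL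
  have hnot_range : ∀ p ∈ L, p.2 ∉ (φ p.1).range := by
    intro p hp
    rw [hL, List.mem_append, List.mem_cons] at hp
    rcases hp with hp | hp | hp
    · exact hred p hp
    · subst hp; exact ha
    · obtain ⟨q, hq, rfl⟩ := mem_invword hp
      simpa only [inv_mem_iff] using hred q hq
  have hn1 : ∀ p ∈ L, p.2 ≠ (1 : Γ p.1) := fun p hp h1 =>
    hnot_range p hp (h1 ▸ one_mem _)
  have hchinv := chain'_invword (l := l₀) hch
  have hheadinv : (invword (Γ := Γ) l₀).head? =
      some ⟨(l₀.getLast hne).1, (l₀.getLast hne).2⁻¹⟩ := by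
    conv_lhs => rw [← List.dropLast_append_getLast hne]
    rw [invword_concat]
    rfl
  have hchain : L.Chain' Rne := by
    rw [hL, List.Chain', List.isChain_append]
    refine ⟨hch, ?_, ?_⟩
    · rw [List.isChain_cons]
      refine ⟨?_, hchinv⟩
      intro y hy
      rw [hheadinv, Option.mem_def, Option.some_inj] at hy
      subst hy
      show true ≠ _
      rw [hlast]
      simp
    · intro x hx y hy
      rw [List.getLast?_eq_getLast hne, Option.mem_def, Option.some_inj] at hx
      subst hx
      simp only [List.head?_cons, Option.mem_def, Option.some_inj] at hy
      subst hy
      show _ ≠ true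
      rw [hlast]
      simp
  set V : Word Γ := ⟨L, hn1, hchain⟩ with hV
  have hVred : Monoid.PushoutI.Reduced φ V := by
    intro p hp
    exact hnot_range p hp
  obtain ⟨w', hw'prod, hw'map⟩ := hVred.exists_normalWord_prod_eq d
  have hprodV : ofCoprodI (φ := φ) V.prod = of (φ := φ) true a'' := by
    rw [ofCoprodI_wordProd]
    show prodOf φ L = _
    rw [hL, prodOf_append, prodOf_cons, prodOf_invword, ← mul_assoc, heq]
  have hw'L : w'.toList.length = L.length := by
    have := congrArg List.length hw'map
    simpa using this
  have hLlen : 3 ≤ L.length := by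
    have : 1 ≤ l₀.length := List.length_pos_iff.2 hne
    simp only [hL, List.length_append, List.length_cons, invword_length]
    omega
  obtain ⟨⟨⟨r, hr⟩, ⟨s, hs⟩⟩, hrs⟩ := ((d.compl true).existsUnique a'').exists
  obtain ⟨b, rfl⟩ := hr
  by_cases hs1 : s = 1
  · have ha'' : a'' = φ true b := by
      have := hrs
      simp only [hs1, mul_one] at this
      exact this.symm
    have hw₂ : (⟨Word.empty, b, by simp [Word.empty]⟩ : NormalWord d).prod
        = of true a'' := by
      simp [NormalWord.prod, Word.prod, Word.empty, ha'', of_apply_eq_base]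
    have heqw := NormalWord.prod_injective (hw'prod.trans (hprodV.trans hw₂.symm))
    have : w'.toList = [] := by rw [heqw]; rfl
    rw [this] at hw'L
    simp at hw'L
    omega
  · have hss : s ∈ d.set true := hs
    have hsne : s ∉ (φ true).range := mem_set_not_mem_range φ d hss hs1
    have hw₂ : (⟨⟨[⟨true, s⟩], by simpa using hs1, by simp⟩, b, by
        intro i g hg
        rw [List.mem_singleton] at hg
        cases hg
        exact hss⟩ : NormalWord d).prod = of true a'' := by
      simp only [NormalWord.prod, Word.prod]
      simp only [← hrs]
      simp [map_mul, of_apply_eq_base]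
    have heqw := NormalWord.prod_injective (hw'prod.trans (hprodV.trans hw₂.symm))
    have : w'.toList = [⟨true, s⟩] := by rw [heqw]
    rw [this] at hw'L
    simp at hw'L
    omega


lemma K1 (hinj : ∀ i, Injective (φ i))
    (hcent : ∀ (i) (b : B) (g : Γ i), φ i b * g = g * φ i b)
    (l : List (Σ i, Γ i))
    (hch : l.Chain' Rne)
    (hred : ∀ p ∈ l, p.2 ∉ (φ p.1).range)
    (hl : prodOf φ l ∉ (of (φ := φ) true).range)
    (a : Γ true) (ha : a ∉ (φ true).range) :
    prodOf φ l * of true a * (prodOf φ l)⁻¹ ∉ (of (φ := φ) true).range := by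
  rcases List.eq_nil_or_concat l with rfl | ⟨l', p, rfl⟩
  · rw [prodOf_nil] at hl
    exact (hl (one_mem _)).elim
  rcases p with ⟨i, g⟩
  rw [List.concat_eq_append] at *
  cases i with
  | false =>
    have hlast : ((l' ++ [(⟨false, g⟩ : Σ i, Γ i)]).getLast (by simp)).1 = false := by
      rw [List.getLast_concat]
    exact K0 φ hinj (l' ++ [⟨false, g⟩]) (by simp) hch hred hlast a ha
  | true =>
    by_cases hl' : l' = []
    · subst hl'
      rw [List.nil_append, prodOf_singleton] at hl
      exact (hl ⟨g, rfl⟩).elim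
    · have hjunc : Rne (l'.getLast hl') ⟨true, g⟩ := by
        rw [List.Chain', List.isChain_append] at hch
        exact hch.2.2 _ (by rw [List.getLast?_eq_getLast hl']; rfl) _ rfl
      have hlast' : (l'.getLast hl').1 = false := by
        revert hjunc
        show (l'.getLast hl').1 ≠ true → _
        cases (l'.getLast hl').1 <;> simp
      have hch' : l'.Chain' Rne := (List.isChain_append.mp hch).1
      have hred' : ∀ p ∈ l', p.2 ∉ (φ p.1).range := fun p hp =>
        hred p (List.mem_append_left _ hp)
      have hAelt : g * a * g⁻¹ ∉ (φ true).range := by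
        rintro ⟨b, hb⟩
        apply ha
        refine ⟨b, ?_⟩
        have : a = g⁻¹ * (φ true b) * g := by
          rw [hb]; group
        rw [this, mul_assoc, hcent true b g]
        group
      have key := K0 φ hinj l' hl' hch' hred' hlast' (g * a * g⁻¹) hAelt
      intro hmem
      apply key
      have heq2 : prodOf φ l' * of true (g * a * g⁻¹) * (prodOf φ l')⁻¹
          = prodOf φ (l' ++ [⟨true, g⟩]) * of true a * (prodOf φ (l' ++ [⟨true, g⟩]))⁻¹ := by
        rw [prodOf_append, prodOf_singleton, map_mul, map_mul, map_inv]
        group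
      rw [heq2]
      exact hmem

lemma conj_not_mem_range (hinj : ∀ i, Injective (φ i))
    (hcent : ∀ (i) (b : B) (g : Γ i), φ i b * g = g * φ i b)
    {y x : PushoutI φ}
    (hy : y ∉ (of (φ := φ) true).range)
    (hx : x ∈ (of (φ := φ) true).range)
    (hxb : x ∉ (base φ).range) :
    y * x * y⁻¹ ∉ (of (φ := φ) true).range := by
  classical
  obtain ⟨a, rfl⟩ := hx
  have ha : a ∉ (φ true).range := by
    rintro ⟨b, rfl⟩
    exact hxb ⟨b, (of_apply_eq_base φ true b).symm⟩
  obtain ⟨d⟩ := transversal_nonempty φ hinj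
  have hbase : ∀ (b : B) (z : PushoutI φ), base φ b * z = z * base φ b := by
    intro b z
    induction z using PushoutI.induction_on with
    | of i g => rw [← of_apply_eq_base, ← map_mul, hcent, map_mul]
    | base h =>
      rw [← map_mul, ← map_mul]
      congr 1
      apply hinj true
      rw [map_mul, map_mul, hcent]
    | mul z₁ z₂ ih₁ ih₂ => rw [← mul_assoc, ih₁, mul_assoc, ih₂, mul_assoc]
  set w : NormalWord d := y • NormalWord.empty with hw
  have hyw : y = base φ w.head * prodOf φ w.toList := by
    have h1 : w.prod = y := by rw [hw, prod_smul, prod_empty, mul_one]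
    rw [← h1, NormalWord.prod, ofCoprodI_wordProd]
  have hred : ∀ p ∈ w.toList, p.2 ∉ (φ p.1).range := fun p hp =>
    mem_set_not_mem_range φ d (w.normalized p.1 p.2 hp) (w.ne_one p hp)
  have hPl : prodOf φ w.toList ∉ (of (φ := φ) true).range := by
    rintro ⟨g, hg⟩
    apply hy
    refine ⟨φ true w.head * g, ?_⟩
    rw [map_mul, of_apply_eq_base, hg, hyw]
  have key := K1 φ hinj hcent w.toList w.toWord.chain_ne hred hPl a ha
  intro hmem
  apply key
  have hconj : y * of true a * y⁻¹
      = prodOf φ w.toList * of true a * (prodOf φ w.toList)⁻¹ := by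
    rw [hyw]
    have h2 : base φ w.head * prodOf φ w.toList * of true a
        * (base φ w.head * prodOf φ w.toList)⁻¹
        = base φ w.head * (prodOf φ w.toList * of true a * (prodOf φ w.toList)⁻¹)
          * (base φ w.head)⁻¹ := by group
    rw [h2, hbase w.head, mul_inv_cancel_right]
  rw [hconj] at hmem
  exact hmem


section Transfer

variable {G : Type u} [Group G]

abbrev fam (A C : Subgroup G) : Bool → Type u := fun i => ↥(cond i A C)

variable {A C B D : Subgroup G}

def famMap (h : IsCentralAmalgamIn A C B D) :
    ∀ i : Bool, ↥B →* fam A C i := fun i =>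
  Subgroup.inclusion (by cases i; exacts [h.B_le_C, h.B_le_A])

lemma famLe (h : IsCentralAmalgamIn A C B D) : ∀ i : Bool, cond i A C ≤ D := fun i => by
  cases i; exacts [h.C_le, h.A_le]

def toD (h : IsCentralAmalgamIn A C B D) : PushoutI (famMap h) →* ↥D :=
  PushoutI.lift (fun i => Subgroup.inclusion (famLe h i))
    (Subgroup.inclusion (h.B_le_A.trans h.A_le))
    (fun i => by ext b; cases i <;> rfl)

lemma toD_of (h : IsCentralAmalgamIn A C B D) (i : Bool) (g : fam A C i) :
    toD h (PushoutI.of i g) = Subgroup.inclusion (famLe h i) g :=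
  PushoutI.lift_of _ _ _ g

lemma toD_base (h : IsCentralAmalgamIn A C B D) (b : ↥B) :
    toD h (PushoutI.base (famMap h) b) = Subgroup.inclusion (h.B_le_A.trans h.A_le) b :=
  PushoutI.lift_base _ _ _ b

theorem mem_base_of_conj (h : IsCentralAmalgamIn A C B D) {y a : G} (hyD : y ∈ D)
    (hyA : y ∉ A) (haA : a ∈ A) (hconj : y * a * y⁻¹ ∈ A) : a ∈ B := by
  classical
  have hinj : ∀ i, Function.Injective (famMap h i) := fun i =>
    Subgroup.inclusion_injective _
  have hcent : ∀ (i) (b : ↥B) (g : fam A C i), famMap h i b * g = g * famMap h i b := by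
    intro i b g
    apply Subtype.ext
    push_cast
    cases i
    · exact h.central_C b b.2 g g.2
    · exact h.central_A b b.2 g g.2
  obtain ⟨Ψ, ⟨hΨA, hΨC⟩, -⟩ := h.isPushout (PushoutI (famMap h))
      (PushoutI.of (φ := famMap h) true) (PushoutI.of (φ := famMap h) false)
      (fun b hb => by
        have h1 := PushoutI.of_apply_eq_base (famMap h) true ⟨b, hb⟩
        have h2 := PushoutI.of_apply_eq_base (famMap h) false ⟨b, hb⟩
        exact h1.trans h2.symm)
  have hid : ∀ x : ↥D, toD h (Ψ x) = x := by
    obtain ⟨φ₀, _, huniq⟩ := h.isPushout (↥D) (Subgroup.inclusion h.A_le)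
      (Subgroup.inclusion h.C_le) (fun b hb => rfl)
    have h1 : (toD h).comp Ψ = φ₀ := by
      apply huniq
      constructor
      · ext a
        have h3 : toD h (Ψ (Subgroup.inclusion h.A_le a))
            = toD h (PushoutI.of (φ := famMap h) true a) :=
          congrArg (toD h) (DFunLike.congr_fun hΨA a)
        have h4 := toD_of h true a
        exact congrArg Subtype.val (h3.trans h4)
      · ext c
        have h3 : toD h (Ψ (Subgroup.inclusion h.C_le c))
            = toD h (PushoutI.of (φ := famMap h) false c) :=
          congrArg (toD h) (DFunLike.congr_fun hΨC c)
        have h4 := toD_of h false c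
        exact congrArg Subtype.val (h3.trans h4)
    have h2 : MonoidHom.id ↥D = φ₀ := by
      apply huniq
      constructor <;> ext x <;> rfl
    intro x
    calc toD h (Ψ x) = ((toD h).comp Ψ) x := rfl
    _ = φ₀ x := by rw [h1]
    _ = x := by rw [← h2]; rfl
  have hmemA : ∀ (x : G) (hx : x ∈ D),
      (x ∈ A ↔ Ψ ⟨x, hx⟩ ∈ (PushoutI.of (φ := famMap h) true).range) := by
    intro x hx
    constructor
    · intro hxa
      refine ⟨⟨x, hxa⟩, ?_⟩
      have h3 := DFunLike.congr_fun hΨA ⟨x, hxa⟩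
      exact h3.symm.trans (congrArg Ψ (Subtype.ext rfl))
    · rintro ⟨g, hg⟩
      have h4 : (⟨x, hx⟩ : ↥D) = Subgroup.inclusion (famLe h true) g := by
        rw [← toD_of h true g, hg, hid]
      have h5 : x = ((Subgroup.inclusion (famLe h true)) g : G) :=
        congrArg Subtype.val h4
      rw [h5]
      exact g.2
  have hmemB : ∀ (x : G) (hx : x ∈ D),
      Ψ ⟨x, hx⟩ ∈ (PushoutI.base (famMap h)).range → x ∈ B := by
    intro x hx
    rintro ⟨b, hb⟩
    have h4 : (⟨x, hx⟩ : ↥D) = Subgroup.inclusion (h.B_le_A.trans h.A_le) b := by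
      rw [← toD_base h b, hb, hid]
    have h5 : x = ((Subgroup.inclusion (h.B_le_A.trans h.A_le)) b : G) :=
      congrArg Subtype.val h4
    rw [h5]
    exact b.2
  by_contra haB
  have haD : a ∈ D := h.A_le haA
  have hx1 : Ψ ⟨a, haD⟩ ∈ (PushoutI.of (φ := famMap h) true).range :=
    (hmemA a haD).mp haA
  have hx2 : Ψ ⟨a, haD⟩ ∉ (PushoutI.base (famMap h)).range := fun hb =>
    haB (hmemB a haD hb)
  have hy1 : Ψ ⟨y, hyD⟩ ∉ (PushoutI.of (φ := famMap h) true).range := fun hr =>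
    hyA ((hmemA y hyD).mpr hr)
  have hk := conj_not_mem_range (famMap h) hinj hcent hy1 hx1 hx2
  apply hk
  have hmemD : y * a * y⁻¹ ∈ D := D.mul_mem (D.mul_mem hyD haD) (D.inv_mem hyD)
  have h6 : Ψ ⟨y, hyD⟩ * Ψ ⟨a, haD⟩ * (Ψ ⟨y, hyD⟩)⁻¹ = Ψ ⟨y * a * y⁻¹, hmemD⟩ := by
    rw [← map_inv, ← map_mul, ← map_mul]
    rfl
  rw [h6]
  exact (hmemA _ hmemD).mp hconj

end Transfer

end AmalgHelper

/-- If a subgroup `H` of `G` is spread out, then its commutator subgroup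
`H' = ⁅H, H⁆` is itself spread out. -/
theorem commutator_spreadOut_of_spreadOut {G : Type u} [Group G]
    (S : IteratedAmalgam G) (H : Subgroup G) (hH : S.SpreadOut H) :
    S.SpreadOut ⁅H, H⁆ := by
  classical
  intro n hle
  have hmono : Monotone S.Gn := monotone_nat_of_le_succ fun k => (S.amalgam k).A_le
  have hanti : Antitone S.Bn := antitone_nat_of_succ_le S.B_antitone
  have hexists : ∀ x : G, ∃ m, x ∈ S.Gn m := by
    intro x
    have hx : x ∈ ⨆ m, S.Gn m := by rw [S.iSup_G]; trivial
    exact (Subgroup.mem_iSup_of_directed hmono.directed_le).mp hx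
  obtain ⟨h, hhH, hh2⟩ := SetLike.not_le_iff_exists.mp (hH (n + 2))
  have hexh : ∃ m, h ∈ S.Gn m := hexists h
  have hp : h ∈ S.Gn (Nat.find hexh) := Nat.find_spec hexh
  have hplt : n + 2 < Nat.find hexh := by
    by_contra hc
    push_neg at hc
    exact hh2 (hmono hc hp)
  apply hH (Nat.find hexh)
  intro y hyH
  by_contra hyp
  have hexy : ∃ m, y ∈ S.Gn m := hexists y
  have hq : y ∈ S.Gn (Nat.find hexy) := Nat.find_spec hexy
  have hpq : Nat.find hexh < Nat.find hexy := by
    by_contra hc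
    push_neg at hc
    exact hyp (hmono hc hq)
  set q' : ℕ := Nat.find hexy - 1 with hq'def
  have hq1 : y ∈ S.Gn (q' + 1) := by
    have : q' + 1 = Nat.find hexy := by omega
    rw [this]; exact hq
  have hq2 : y ∉ S.Gn q' := Nat.find_min hexy (by omega)
  have hpq' : Nat.find hexh ≤ q' := by omega
  have hhq' : h ∈ S.Gn q' := hmono hpq' hp
  have hcomm : h * y * h⁻¹ * y⁻¹ ∈ S.Gn q' := by
    open scoped commutatorElement in have h1 : ⁅h, y⁆ ∈ ⁅H, H⁆ := Subgroup.commutator_mem_commutator hhH hyH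
    open scoped commutatorElement in have h2 : ⁅h, y⁆ ∈ S.Gn q' := hmono (by omega : n ≤ q') (hle h1)
    rwa [commutatorElement_def] at h2
  have hyh : y * h⁻¹ * y⁻¹ ∈ S.Gn q' := by
    have heq : y * h⁻¹ * y⁻¹ = h⁻¹ * (h * y * h⁻¹ * y⁻¹) := by group
    rw [heq]
    exact mul_mem (inv_mem hhq') hcomm
  have hkey : h⁻¹ ∈ S.Bn q' :=
    AmalgHelper.mem_base_of_conj (S.amalgam q') hq1 hq2 (inv_mem hhq') hyh
  have hb : h⁻¹ ∈ S.Bn (n + 1) := hanti (by omega : n + 1 ≤ q') hkey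
  have hhn : h⁻¹ ∈ S.Hn (n + 2) := S.B_le_H_succ (n + 1) hb
  have hgn : h⁻¹ ∈ S.Gn (n + 2) := (S.amalgam (n + 1)).C_le hhn
  exact hh2 (by simpa using inv_mem hgn)
end

section
/- In the setting of the iterated central amalgamation: every non-trivial subnormal subgroup S of G is non-abelian and has trivial radical, i.e. every soluble normal subgroup of S is trivial. -/
universe u

section Aux
open Monoid

section PingPong
variable {H : Type u} [Group H] {G2 : Bool → Type u} [∀ i, Group (G2 i)]
  (φ : ∀ i, H →* G2 i)

/-- product of a list of letters in the pushout -/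
def prodK (L : List (Σ i, G2 i)) : PushoutI φ :=
  (L.map fun l => PushoutI.of (φ := φ) l.1 l.2).prod

theorem prodK_append (X Y : List (Σ i, G2 i)) :
    prodK φ (X ++ Y) = prodK φ X * prodK φ Y := by
  simp [prodK]

/-- reverse-inverse of a word -/
def rinv (L : List (Σ i, G2 i)) : List (Σ i, G2 i) :=
  (L.map fun l => ⟨l.1, l.2⁻¹⟩).reverse

theorem prodK_rinv (L : List (Σ i, G2 i)) :
    prodK φ (rinv L) = (prodK φ L)⁻¹ := by
  induction L with
  | nil => simp [prodK, rinv]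
  | cons l L ih =>
      rw [rinv, List.map_cons, List.reverse_cons, ← rinv, prodK_append]
      simp only [prodK, List.map_cons, List.map_nil, List.prod_cons, List.prod_nil,
        List.map_singleton, mul_one, map_inv] at ih ⊢
      rw [ih, mul_inv_rev]

end PingPong

section PingPong2
open Monoid.PushoutI
variable {H : Type u} [Group H] {G2 : Bool → Type u} [∀ i, Group (G2 i)]
  {φ : ∀ i, H →* G2 i}

theorem pushout_seq_ne_one (hφ : ∀ i, Function.Injective (φ i))
    {a : G2 true} (ha : a ∉ (φ true).range)
    {b : G2 false} (hb : b ∉ (φ false).range)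
    (v : ℕ → PushoutI φ)
    (hv0 : v 0 = of false b * of true a * (of false b)⁻¹)
    (hvs : ∀ k, v (k+1) = v k * of true a * (v k)⁻¹ * (of true a)⁻¹)
    (k : ℕ) : v (k + 1) ≠ 1 := by
  classical
  set A1 : (Σ i, G2 i) := ⟨true, a⟩ with hA1
  set A2 : (Σ i, G2 i) := ⟨true, a⁻¹⟩ with hA2
  set C1 : (Σ i, G2 i) := ⟨false, b⟩ with hC1
  set C2 : (Σ i, G2 i) := ⟨false, b⁻¹⟩ with hC2
  have hmem : ∀ l : (Σ i, G2 i), (l = A1 ∨ l = A2 ∨ l = C1 ∨ l = C2) →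
      l.2 ∉ (φ l.1).range := by
    rintro l (rfl | rfl | rfl | rfl)
    · exact ha
    · exact fun h => ha (inv_mem_iff.mp h)
    · exact hb
    · exact fun h => hb (inv_mem_iff.mp h)
  have hC1A2 : C1 ≠ A2 := by
    intro h
    have : C1.1 = A2.1 := by rw [h]
    simp [hA1, hA2, hC1, hC2] at this
  have key : ∀ k, ∃ L : List (Σ i, G2 i),
      (∀ l ∈ L, l = A1 ∨ l = A2 ∨ l = C1 ∨ l = C2) ∧
      (L.Chain' fun p q => p.1 ≠ q.1) ∧
      L.head? = some C1 ∧ L.getLast? = some A2 ∧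
      v (k+1) = prodK φ L := by
    intro k
    induction k with
    | zero =>
        refine ⟨[C1, A1, C2, A1, C1, A2, C2, A2], ?_, ?_, rfl, ?_, ?_⟩
        · intro l hl
          simp only [List.mem_cons, List.not_mem_nil, or_false] at hl
          tauto
        · simp [List.Chain', List.isChain_cons_cons, hA1, hA2, hC1, hC2]
        · simp
        · rw [hvs 0, hv0]
          simp only [prodK, List.map_cons, List.map_nil, List.prod_cons, List.prod_nil,
            hA1, hA2, hC1, hC2, map_inv, mul_one]
          group
    | succ k ih =>
        obtain ⟨L, hLmem, hLchain, hLhead, hLlast, hLprod⟩ := ih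
        have hLne : L ≠ [] := by rintro rfl; simp at hLhead
        have hgetLast : L.getLast hLne = A2 := by
          rw [List.getLast?_eq_getLast_of_ne_nil hLne] at hLlast
          exact Option.some_injective _ hLlast
        have hL : L.dropLast ++ [A2] = L := by
          rw [← hgetLast]; exact List.dropLast_append_getLast hLne
        set X := L.dropLast with hX
        have hXne : X ≠ [] := by
          rintro hXnil
          rw [hXnil, List.nil_append] at hL
          rw [← hL] at hLhead hLlast
          simp at hLhead
          exact hC1A2 (hLhead.symm)
        have hXhead : X.head? = some C1 := by
          rw [← hL, List.head?_append_of_ne_nil _ hXne] at hLhead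
          exact hLhead
        -- the new word
        refine ⟨X ++ rinv L ++ [A2], ?_, ?_, ?_, ?_, ?_⟩
        · intro l hl
          simp only [List.mem_append, List.mem_singleton] at hl
          rcases hl with (hl | hl) | hl
          · exact hLmem l (List.dropLast_subset L hl)
          · rw [rinv, List.mem_reverse, List.mem_map] at hl
            obtain ⟨m, hm, rfl⟩ := hl
            rcases hLmem m hm with rfl | rfl | rfl | rfl
            · right; left; rw [hA1, hA2]
            · left; rw [hA2, hA1]; simp
            · right; right; right; rw [hC1, hC2]
            · right; right; left; rw [hC2, hC1]; simp
          · subst hl; right; left; rfl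
        · -- chain
          have hrinvne : rinv L ≠ [] := by
            simp [rinv, hLne]
          have hchainX : X.Chain' fun p q => p.1 ≠ q.1 :=
            hLchain.prefix (List.dropLast_prefix L)
          have hchainR : (rinv L).Chain' fun p q => p.1 ≠ q.1 := by
            rw [rinv, List.Chain', List.isChain_reverse, List.isChain_map]
            exact hLchain.imp fun a b hab h2 => hab h2.symm
          have hjunc1 : ∀ x ∈ X.getLast?, x.1 ≠ true := by
            have := (List.isChain_append.mp (hL ▸ hLchain)).2.2
            intro x hx
            have := this x hx A2 rfl
            rwa [hA2] at this
          have hRhead : (rinv L).head? = some ⟨true, a⁻¹⁻¹⟩ := by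
            rw [rinv, List.head?_reverse, List.getLast?_map, hLlast, hA2]
            rfl
          have hRlast : (rinv L).getLast? = some ⟨false, b⁻¹⟩ := by
            rw [rinv, List.getLast?_reverse, List.head?_map, hLhead, hC1]
            rfl
          rw [List.Chain', List.isChain_append]
          refine ⟨?_, ?_, ?_⟩
          · rw [List.isChain_append]
            refine ⟨hchainX, hchainR, ?_⟩
            intro x hx y hy
            rw [hRhead] at hy
            rcases Option.mem_some_iff.mp hy with rfl
            exact hjunc1 x hx
          · simp [List.isChain_cons_cons]
          · intro x hx y hy
            rw [List.getLast?_append_of_ne_nil _ hrinvne, hRlast] at hx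
            rcases Option.mem_some_iff.mp hx with rfl
            simp only [List.head?_cons] at hy
            rcases Option.mem_some_iff.mp hy with rfl
            rw [hA2]
            simp
        · rw [List.append_assoc, List.head?_append_of_ne_nil _ hXne]
          exact hXhead
        · exact List.getLast?_concat
        · have hXprod : prodK φ L = prodK φ X * (of true a)⁻¹ := by
            rw [← hL, prodK_append]
            simp [prodK, hA2]
          rw [hvs (k+1), hLprod, prodK_append, prodK_append, prodK_rinv, hXprod]
          simp only [prodK, List.map_cons, List.map_nil, List.prod_cons, List.prod_nil,
            hA2, map_inv, mul_one]
          group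
  intro h1
  obtain ⟨L, hLmem, hLchain, hLhead, hLlast, hLprod⟩ := key k
  have hne1 : ∀ l ∈ L, l.2 ≠ 1 := by
    intro l hl hl1
    exact hmem l (hLmem l hl) (hl1 ▸ one_mem _)
  let w : Monoid.CoprodI.Word G2 := ⟨L, hne1, hLchain⟩
  have hred : Monoid.PushoutI.Reduced φ w := fun g hg => hmem g (hLmem g hg)
  have hwprod : ofCoprodI w.prod = prodK φ L := by
    show ofCoprodI (List.prod _) = _
    rw [map_list_prod, List.map_map, prodK]
    congr 1
  have hempty := hred.eq_empty_of_mem_range hφ (by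
    rw [hwprod, ← hLprod, h1]; exact one_mem _)
  have : L = [] := congrArg Monoid.CoprodI.Word.toList hempty
  rw [this] at hLhead
  simp at hLhead


end PingPong2

section Amalgam
open Monoid Monoid.PushoutI
variable {G : Type u} [Group G]

/-- The two-element family of subgroups of the amalgam. -/
def amalgFam (A C : Subgroup G) : Bool → Type u := fun i => cond i ↥A ↥C

instance amalgFamGroup (A C : Subgroup G) : ∀ i, Group (amalgFam A C i) := fun i =>
  match i with
  | true => inferInstanceAs (Group ↥A)
  | false => inferInstanceAs (Group ↥C)

/-- The two inclusion maps from the base. -/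
def amalgHom {A C B : Subgroup G} (hBA : B ≤ A) (hBC : B ≤ C) :
    ∀ i, ↥B →* amalgFam A C i := fun i =>
  match i with
  | true => Subgroup.inclusion hBA
  | false => Subgroup.inclusion hBC

theorem IsCentralAmalgamIn.seq_ne_one {A C B D : Subgroup G}
    (am : IsCentralAmalgamIn A C B D) {t c : G}
    (ht : t ∈ A) (ht' : t ∉ B) (hc : c ∈ C) (hc' : c ∉ B)
    (u : ℕ → G) (hu0 : u 0 = c * t * c⁻¹)
    (hus : ∀ k, u (k+1) = u k * t * (u k)⁻¹ * t⁻¹) (k : ℕ) :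
    u (k+1) ≠ 1 := by
  classical
  set φf := amalgHom am.B_le_A am.B_le_C with hφf
  have hinj : ∀ i, Function.Injective (φf i) := fun i => by
    cases i
    · show Function.Injective (Subgroup.inclusion am.B_le_C)
      exact Subgroup.inclusion_injective _
    · show Function.Injective (Subgroup.inclusion am.B_le_A)
      exact Subgroup.inclusion_injective _
  set K := PushoutI φf with hK
  set f : ↥A →* K := PushoutI.of (φ := φf) true with hf
  set g : ↥C →* K := PushoutI.of (φ := φf) false with hg
  have hcompat : ∀ (b : G) (hb : b ∈ B),
      f ⟨b, am.B_le_A hb⟩ = g ⟨b, am.B_le_C hb⟩ := by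
    intro b hb
    have h1 : f (φf true ⟨b, hb⟩) = PushoutI.base φf ⟨b, hb⟩ :=
      of_apply_eq_base φf true ⟨b, hb⟩
    have h2 : g (φf false ⟨b, hb⟩) = PushoutI.base φf ⟨b, hb⟩ :=
      of_apply_eq_base φf false ⟨b, hb⟩
    exact h1.trans h2.symm
  obtain ⟨φD, ⟨hfc, hgc⟩, -⟩ := am.isPushout K f g hcompat
  -- the sequence inside D
  set tD : ↥D := ⟨t, am.A_le ht⟩ with htD
  set cD : ↥D := ⟨c, am.C_le hc⟩ with hcD
  set U : ℕ → ↥D := fun k =>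
    Nat.rec (cD * tD * cD⁻¹) (fun _ w => w * tD * w⁻¹ * tD⁻¹) k with hU
  have hUcoe : ∀ k, ((U k : G)) = u k := by
    intro k
    induction k with
    | zero =>
        show ((cD * tD * cD⁻¹ : ↥D) : G) = u 0
        rw [hu0]
        simp [htD, hcD]
    | succ k ih =>
        show ((U k * tD * (U k)⁻¹ * tD⁻¹ : ↥D) : G) = u (k+1)
        rw [hus k, ← ih]
        simp [htD]
  have hφt : φD tD = f ⟨t, ht⟩ := by
    have := DFunLike.congr_fun hfc (⟨t, ht⟩ : ↥A)
    exact this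
  have hφc : φD cD = g ⟨c, hc⟩ := by
    have := DFunLike.congr_fun hgc (⟨c, hc⟩ : ↥C)
    exact this
  have ha : (⟨t, ht⟩ : ↥A) ∉ (φf true).range := by
    rintro ⟨x, hx⟩
    apply ht'
    have : (x : G) = t := congrArg Subtype.val hx
    exact this ▸ x.2
  have hbmem : (⟨c, hc⟩ : ↥C) ∉ (φf false).range := by
    rintro ⟨x, hx⟩
    apply hc'
    have : (x : G) = c := congrArg Subtype.val hx
    exact this ▸ x.2
  intro h1
  refine pushout_seq_ne_one hinj ha hbmem (fun k => φD (U k)) ?_ ?_ k ?_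
  · show φD (cD * tD * cD⁻¹) = _
    rw [map_mul, map_mul, map_inv, hφt, hφc]
    rfl
  · intro j
    show φD (U j * tD * (U j)⁻¹ * tD⁻¹) = _
    rw [map_mul, map_mul, map_mul, map_inv, map_inv, hφt]
    rfl
  · show φD (U (k+1)) = 1
    have : U (k+1) = 1 := by
      apply Subtype.ext
      rw [hUcoe (k+1), h1]
      rfl
    rw [this, map_one]

end Amalgam


section MainAux
variable {G : Type u} [Group G]

theorem abelian_subnormal_eq_bot (S : IteratedAmalgam G) (N : Subgroup G)
    (hN : Subnormal N ⊤) (hab : ∀ a ∈ N, ∀ b ∈ N, a * b = b * a) : N = ⊥ := by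
  by_contra hbot
  obtain ⟨⟨t, htN⟩, ht1⟩ := Subgroup.ne_bot_iff_exists_ne_one.mp hbot
  have ht1 : t ≠ 1 := fun h => ht1 (Subtype.ext h)
  have hGmono : Monotone S.Gn := monotone_nat_of_le_succ fun n => (S.amalgam n).A_le
  have hBanti : Antitone S.Bn := antitone_nat_of_succ_le S.B_antitone
  obtain ⟨p, hp⟩ : ∃ p, t ∈ S.Gn p := by
    have : t ∈ ⨆ n, S.Gn n := S.iSup_G.symm ▸ Subgroup.mem_top t
    exact (Subgroup.mem_iSup_of_directed (hGmono.directed_le)).mp this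
  obtain ⟨q, hq⟩ : ∃ q, t ∉ S.Bn q := by
    by_contra h
    push_neg at h
    exact ht1 (Subgroup.mem_bot.mp (S.B_iInf ▸ Subgroup.mem_iInf.mpr h))
  have htG : t ∈ S.Gn (max p q) := hGmono (le_max_left p q) hp
  have htB : t ∉ S.Bn (max p q) := fun h => hq (hBanti (le_max_right p q) h)
  set n := max p q
  obtain ⟨c, hcH, hcB⟩ : ∃ c ∈ S.Hn (n+1), c ∉ S.Bn n :=
    SetLike.exists_of_lt (lt_of_le_of_ne (S.B_le_H_succ n) (S.B_ne_H_succ n))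
  obtain ⟨m, ch, hch0, hchm, hstep⟩ := hN
  have htch : ∀ j, j ≤ m → t ∈ ch j := by
    intro j
    induction j with
    | zero => exact fun _ => hch0 ▸ htN
    | succ j ih => exact fun hj => (hstep j hj).1 (ih (Nat.le_of_succ_le hj))
  set u : ℕ → G := fun k =>
    Nat.rec (c * t * c⁻¹) (fun _ w => w * t * w⁻¹ * t⁻¹) k with hu
  have hukey : ∀ k j, j + k = m → u k ∈ ch j := by
    intro k
    induction k with
    | zero =>
        intro j hj
        have : j = m := by omega
        subst this
        rw [hchm]
        exact Subgroup.mem_top _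
    | succ k ih =>
        intro j hj
        have h1 : u k ∈ ch (j+1) := ih (j+1) (by omega)
        have h2 := (hstep j (by omega)).2 (u k) h1 t (htch j (by omega))
        exact mul_mem h2 (inv_mem (htch j (by omega)))
  have hum : u m ∈ N := hch0 ▸ hukey m 0 (by omega)
  have humt : u (m+1) = 1 := by
    show u m * t * (u m)⁻¹ * t⁻¹ = 1
    rw [hab (u m) hum t (hch0 ▸ htch 0 (Nat.zero_le m))]
    group
  exact (S.amalgam n).seq_ne_one htG htB hcH hcB u rfl (fun _ => rfl) m humt

theorem conj_mem_commutator {N : Subgroup G} {g : G} (hg : g ∈ N) {x : G}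
    (hx : x ∈ ⁅N, N⁆) : g * x * g⁻¹ ∈ ⁅N, N⁆ := by
  have hmap : Subgroup.map (MulAut.conj g).toMonoidHom N = N := by
    apply le_antisymm
    · rintro y ⟨x, hxN, rfl⟩
      simp only [MulAut.conj_apply, MulEquiv.toMonoidHom_eq_coe, MonoidHom.coe_coe]
      exact mul_mem (mul_mem hg hxN) (inv_mem hg)
    · intro y hy
      refine ⟨g⁻¹ * y * g, mul_mem (mul_mem (inv_mem hg) hy) hg, ?_⟩
      simp only [MulAut.conj_apply, MulEquiv.toMonoidHom_eq_coe, MonoidHom.coe_coe]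
      group
  have : (MulAut.conj g).toMonoidHom x ∈
      Subgroup.map (MulAut.conj g).toMonoidHom ⁅N, N⁆ :=
    Subgroup.mem_map_of_mem _ hx
  rw [Subgroup.map_commutator, hmap] at this
  simpa using this

theorem commutator_le_self (N : Subgroup G) : ⁅N, N⁆ ≤ N := by
  rw [Subgroup.commutator_le]
  intro g1 h1 g2 h2
  exact mul_mem (mul_mem (mul_mem h1 h2) (inv_mem h1)) (inv_mem h2)

theorem Subnormal.of_normal_le {T N : Subgroup G} (hT : Subnormal T ⊤)
    (hNT : N ≤ T) (hconj : ∀ g ∈ T, ∀ x ∈ N, g * x * g⁻¹ ∈ N) :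
    Subnormal N ⊤ := by
  obtain ⟨m, ch, h0, hm, hstep⟩ := hT
  refine ⟨m + 1, fun i => Nat.casesOn i N ch, rfl, hm, ?_⟩
  intro i hi
  cases i with
  | zero =>
      constructor
      · show N ≤ ch 0
        rw [h0]; exact hNT
      · show ∀ g ∈ ch 0, ∀ x ∈ N, g * x * g⁻¹ ∈ N
        rw [h0]; exact hconj
  | succ i => exact hstep i (by omega)

theorem solvable_subnormal_eq_bot (S : IteratedAmalgam G) (N : Subgroup G)
    (hN : Subnormal N ⊤) (hsol : IsSolvable ↥N) : N = ⊥ := by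
  obtain ⟨n, hn⟩ := hsol.solvable
  have hmap : ∀ (M : Subgroup G) (d : ℕ),
      (derivedSeries ↥M d).map M.subtype = (fun X : Subgroup G => ⁅X, X⁆)^[d] M := by
    intro M d
    induction d with
    | zero =>
        rw [Function.iterate_zero_apply, derivedSeries_zero]
        rw [← MonoidHom.range_eq_map]
        exact Subgroup.range_subtype M
    | succ d ih =>
        rw [Function.iterate_succ_apply', derivedSeries_succ,
          Subgroup.map_commutator, ih]
  have hFn : (fun X : Subgroup G => ⁅X, X⁆)^[n] N = ⊥ := by
    rw [← hmap N n, hn]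
    exact Subgroup.map_bot _
  have aux : ∀ d (M : Subgroup G), Subnormal M ⊤ →
      (fun X : Subgroup G => ⁅X, X⁆)^[d] M = ⊥ → M = ⊥ := by
    intro d
    induction d with
    | zero => exact fun M _ h => h
    | succ d ih =>
        intro M hM h
        have hcomm : Subnormal ⁅M, M⁆ ⊤ :=
          hM.of_normal_le (commutator_le_self M) fun g hg x hx =>
            conj_mem_commutator hg hx
        have h' : (fun X : Subgroup G => ⁅X, X⁆)^[d] ⁅M, M⁆ = ⊥ := by
          rw [← Function.iterate_succ_apply]
          exact h
        have hMM := ih ⁅M, M⁆ hcomm h'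
        have hab : ∀ a ∈ M, ∀ b ∈ M, a * b = b * a := by
          intro a ha b hb
          open commutatorElement in have : ⁅a, b⁆ ∈ (⊥ : Subgroup G) :=
            hMM ▸ Subgroup.commutator_mem_commutator ha hb
          exact commutatorElement_eq_one_iff_mul_comm.mp (Subgroup.mem_bot.mp this)
        exact abelian_subnormal_eq_bot S M hM hab
  exact aux n N hN hFn

end MainAux
end Aux

/-- Every non-trivial subnormal subgroup `T` of `G` is non-abelian and has trivial
radical: every soluble normal subgroup of `T` is trivial. -/
theorem subnormal_nonabelian_and_radical_eq_bot {G : Type u} [Group G]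
    (S : IteratedAmalgam G) (T : Subgroup G) (hT : Subnormal T ⊤) (hTbot : T ≠ ⊥) :
    (∃ a ∈ T, ∃ b ∈ T, a * b ≠ b * a) ∧
    ∀ N : Subgroup G, N ≤ T → (∀ g ∈ T, ∀ x ∈ N, g * x * g⁻¹ ∈ N) →
      IsSolvable ↥N → N = ⊥ := by
  constructor
  · by_contra h
    push_neg at h
    exact hTbot (abelian_subnormal_eq_bot S T hT h)
  · intro N hNT hconj hsol
    exact solvable_subnormal_eq_bot S N (hT.of_normal_le hNT hconj) hsol
end
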